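/- arXiv:2508.19968 — 9 statements merged into one kernel-verified Lean document; each statement's English description precedes it below -/
import Mathlib

section
/- For all integers m ≥ 0, d ≥ 2 and n ≥ 0, the coefficient υ_{m,n} := Σ_{I ⊆ ℕ₊, |I|=n} ∏_{k∈I} 1/((m+k)(m+d-1+k)) satisfies 0 ≤ υ_{m,n} ≤ m!/(m+n)!. -/
/-!
For `d ≥ 2` every factor `x k = 1/((m+k)(m+d-1+k))` with `k > 0` satisfies
`0 ≤ x k ≤ 1/((m+k)(m+k+1))`. For such numbers indexed by a
finite set `S` of integers `> a`, the elementary symmetric function `e_n(S)` is at most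
`(m+a)!/(m+a+n)!`: splitting off the least element `b` of `S` gives
`e_{n+1}(S) = e_{n+1}(S \ {b}) + x_b e_n(S \ {b})`, and the bound propagates because
`(M+1)/(M+n+2) + 1/(M+2) ≤ 1`. Every finite partial sum of the series `υ_{m,n}` is dominated by
`e_n` of the union of its index sets.
-/

open scoped BigOperators

/-- υ_{m,n}: sum over n-element subsets of the positive integers of
∏_{k∈I} 1/((m+k)(m+d-1+k)). -/
noncomputable def upsilon (d m n : ℕ) : ℝ :=
  ∑' I : {s : Finset ℕ // s.card = n ∧ ∀ k ∈ s, 0 < k},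
    ∏ k ∈ I.1, (1 : ℝ) / ((m + k) * (m + d - 1 + k))

open Nat

namespace Multiset

variable {R : Type*} [CommSemiring R]

@[simp]
theorem esymm_zero (s : Multiset R) : s.esymm 0 = 1 := by
  simp [esymm]

theorem esymm_cons_succ (a : R) (s : Multiset R) (n : ℕ) :
    (a ::ₘ s).esymm (n + 1) = s.esymm (n + 1) + a * s.esymm n := by
  simp [esymm, powersetCard_cons, sum_map_mul_left]

theorem esymm_nonneg [PartialOrder R] [IsOrderedRing R] {s : Multiset R} (hs : ∀ a ∈ s, 0 ≤ a)
    (n : ℕ) : 0 ≤ s.esymm n :=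
  sum_nonneg fun _ hp => by
    obtain ⟨t, ht, rfl⟩ := mem_map.1 hp
    exact prod_nonneg fun a ha => hs a (subset_of_le (mem_powersetCard.1 ht).1 ha)

end Multiset

theorem antitone_factorial_div_factorial_add (n : ℕ) :
    Antitone fun M : ℕ => (M ! : ℝ) / (M + n)! := by
  refine antitone_nat_of_succ_le fun M => ?_
  rw [div_le_div_iff₀ (by positivity) (by positivity), show M + 1 + n = M + n + 1 by ring,
    factorial_succ, factorial_succ]
  push_cast
  have : (0 : ℝ) ≤ M ! * (M + n)! := by positivity
  nlinarith [(n.cast_nonneg : (0 : ℝ) ≤ n)]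

theorem factorial_div_factorial_add_recursion_le (M n : ℕ) :
    ((M + 1)! : ℝ) / (M + 1 + (n + 1))! +
        1 / (((M : ℝ) + 1) * (M + 1 + 1)) * ((M + 1)! / (M + 1 + n)!) ≤
      M ! / (M + (n + 1))! := by
  rw [show M + 1 + (n + 1) = M + n + 1 + 1 by ring, show M + 1 + n = M + n + 1 by ring,
    show M + (n + 1) = M + n + 1 by ring, factorial_succ (M + n + 1), factorial_succ M]
  push_cast
  field_simp
  nlinarith [(n.cast_nonneg : (0 : ℝ) ≤ n), (M.cast_nonneg : (0 : ℝ) ≤ M)]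

theorem esymm_map_le_factorial_div (m : ℕ) {x : ℕ → ℝ} (S : Finset ℕ) (a n : ℕ)
    (hS : ∀ k ∈ S, a < k) (hx : ∀ k ∈ S, 0 ≤ x k ∧ x k ≤ 1 / ((m + k) * (m + k + 1))) :
    (S.val.map x).esymm n ≤ (m + a)! / (m + a + n)! := by
  induction S using Finset.induction_on_min generalizing a n with
  | empty =>
    rcases n with _ | n
    · simp [(factorial_pos _).ne']
    · calc ((∅ : Finset ℕ).val.map x).esymm (n + 1) = 0 := by
            simp [Multiset.esymm, Multiset.powersetCard_zero_right]
        _ ≤ _ := by positivity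
  | insert b S hbS ih =>
    rcases n with _ | n
    · simp [(factorial_pos _).ne']
    have hb : b ∉ S := fun h => lt_irrefl b (hbS b h)
    have hab := hS b (Finset.mem_insert_self b S)
    obtain ⟨c, hc⟩ : ∃ c, b = c + 1 := ⟨b - 1, by omega⟩
    have hxS : ∀ k ∈ S, 0 ≤ x k ∧ x k ≤ 1 / ((m + k) * (m + k + 1)) :=
      fun k hk => hx k (Finset.mem_insert_of_mem hk)
    have hxb := (hx b (Finset.mem_insert_self b S)).2
    rw [Finset.insert_val_of_notMem hb, Multiset.map_cons, Multiset.esymm_cons_succ]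
    calc _ ≤ ((m + b)! : ℝ) / (m + b + (n + 1))! +
          1 / ((m + b) * (m + b + 1)) * ((m + b)! / (m + b + n)!) :=
          add_le_add (ih _ _ hbS hxS) (mul_le_mul hxb (ih _ _ hbS hxS)
            (Multiset.esymm_nonneg (by simpa using fun k hk => (hxS k hk).1) _) (by positivity))
      _ ≤ (m + c)! / (m + c + (n + 1))! := by
          subst hc
          simpa [add_assoc] using factorial_div_factorial_add_recursion_le (m + c) n
      _ ≤ (m + a)! / (m + a + (n + 1))! :=
          antitone_factorial_div_factorial_add (n + 1) (Nat.add_le_add_left (by omega) m)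

theorem one_div_mul_add_sub_one_nonneg {d : ℕ} (hd : 2 ≤ d) (m k : ℕ) :
    0 ≤ (1 : ℝ) / ((m + k) * (m + d - 1 + k)) := by
  have : (2 : ℝ) ≤ d := by exact_mod_cast hd
  exact div_nonneg zero_le_one (mul_nonneg (by positivity) (by linarith))

theorem one_div_mul_add_sub_one_le {d : ℕ} (hd : 2 ≤ d) (m : ℕ) {k : ℕ} (hk : 0 < k) :
    (1 : ℝ) / ((m + k) * (m + d - 1 + k)) ≤ 1 / ((m + k) * (m + k + 1)) := by
  have : (2 : ℝ) ≤ d := by exact_mod_cast hd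
  have : (0 : ℝ) < k := by exact_mod_cast hk
  refine one_div_le_one_div_of_le (by positivity) (mul_le_mul_of_nonneg_left ?_ (by positivity))
  linarith

theorem upsilon_nonneg_and_le_factorial_ratio (d m n : ℕ) (hd : 2 ≤ d) :
    0 ≤ upsilon d m n ∧
      upsilon d m n ≤ (Nat.factorial m : ℝ) / (Nat.factorial (m + n)) := by
  set x : ℕ → ℝ := fun k => 1 / ((m + k) * (m + d - 1 + k))
  have hx₀ : ∀ k, 0 ≤ x k := one_div_mul_add_sub_one_nonneg hd m
  refine ⟨tsum_nonneg fun I => Finset.prod_nonneg fun k _ => hx₀ k,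
    tsum_le_of_sum_le' (by positivity) fun u => ?_⟩
  set S := u.biUnion Subtype.val
  have hS : ∀ k ∈ S, 0 < k := by
    simp only [S, Finset.mem_biUnion]
    rintro k ⟨I, -, hk⟩
    exact I.2.2 k hk
  calc ∑ I ∈ u, ∏ k ∈ I.1, x k
        = ∑ s ∈ u.map (Function.Embedding.subtype _), ∏ k ∈ s, x k := by
          rw [Finset.sum_map]; rfl
    _ ≤ ∑ s ∈ S.powersetCard n, ∏ k ∈ s, x k := by
        refine Finset.sum_le_sum_of_subset_of_nonneg (fun s hs => ?_)
          fun s _ _ => Finset.prod_nonneg fun k _ => hx₀ k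
        obtain ⟨I, hI, rfl⟩ := Finset.mem_map.1 hs
        exact Finset.mem_powersetCard.2 ⟨Finset.subset_biUnion_of_mem Subtype.val hI, I.2.1⟩
    _ = (S.val.map x).esymm n := (Finset.esymm_map_val x S n).symm
    _ ≤ m ! / (m + n)! := by
        simpa using esymm_map_le_factorial_div m S 0 n hS
          fun k hk => ⟨hx₀ k, one_div_mul_add_sub_one_le hd m (hS k hk)⟩
end

section
/- For all integers m ≥ 0, d ≥ 2 and n ≥ 0, one has υ_{m,n} ≤ ∏_{j=0}^{n-1} υ_{m+j,1}, where υ_{m,n} = Σ_{I ⊆ ℕ₊, |I|=n} ∏_{k∈I} 1/((m+k)(m+d-1+k)). -/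
open scoped BigOperators

/-!
List an `n`-set of positive integers increasingly as `k₀ < ⋯ < k_{n-1}` and write
`kᵢ = i + 1 + lᵢ`. Its factor `1/((m+kᵢ)(m+d-1+kᵢ))` is the term with index `lᵢ + 1` of the
series `υ_{m+i,1}`. The set is determined by its gap vector `l`, so `υ_{m,n}` is dominated by
the sum over all `l : Fin n → ℕ` of these products, which factors as `∏ᵢ υ_{m+i,1}`.
-/

open Finset

section ProductOfSeries

variable {ι κ : Type*} [Fintype ι] {g : ι → κ → ℝ}

theorem sum_prod_le_prod_tsum (hg : ∀ i, 0 ≤ g i) (hsum : ∀ i, Summable (g i))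
    (S : Finset (ι → κ)) : ∑ f ∈ S, ∏ i, g i (f i) ≤ ∏ i, ∑' k, g i k := by
  classical
  calc ∑ f ∈ S, ∏ i, g i (f i)
      ≤ ∑ f ∈ Fintype.piFinset fun i => S.image (· i), ∏ i, g i (f i) :=
        sum_le_sum_of_subset_of_nonneg
          (fun f hf => Fintype.mem_piFinset.2 fun i => mem_image_of_mem (· i) hf)
          (fun f _ _ => prod_nonneg fun i _ => hg i (f i))
    _ = ∏ i, ∑ k ∈ S.image (· i), g i k := (prod_univ_sum _ _).symm
    _ ≤ ∏ i, ∑' k, g i k :=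
        prod_le_prod (fun i _ => sum_nonneg fun k _ => hg i k)
          (fun i _ => (hsum i).sum_le_tsum _ fun k _ => hg i k)

theorem tsum_prod_comp_le_prod_tsum {α : Type*} (hg : ∀ i, 0 ≤ g i)
    (hsum : ∀ i, Summable (g i)) {φ : α → ι → κ} (hφ : Function.Injective φ) :
    ∑' a, ∏ i, g i (φ a i) ≤ ∏ i, ∑' k, g i k := by
  refine tsum_le_of_sum_le' (prod_nonneg fun i _ => tsum_nonneg (hg i)) fun S => ?_
  simpa only [sum_map, Function.Embedding.coeFn_mk] using
    sum_prod_le_prod_tsum hg hsum (S.map ⟨φ, hφ⟩)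

end ProductOfSeries

theorem Finset.add_one_le_orderEmbOfFin {s : Finset ℕ} {n : ℕ} (h : s.card = n)
    (hs : ∀ k ∈ s, 0 < k) (i : Fin n) : (i : ℕ) + 1 ≤ s.orderEmbOfFin h i := by
  obtain ⟨i, hi⟩ := i
  induction i with
  | zero => exact hs _ (s.orderEmbOfFin_mem h _)
  | succ i ih =>
    exact (ih (by omega)).trans_lt <|
      (s.orderEmbOfFin h).strictMono (Fin.mk_lt_mk.2 i.lt_succ_self)

theorem Finset.prod_eq_prod_orderEmbOfFin {α β : Type*} [LinearOrder α] [CommMonoid β]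
    {s : Finset α} {n : ℕ} (h : s.card = n) (f : α → β) :
    ∏ k ∈ s, f k = ∏ i : Fin n, f (s.orderEmbOfFin h i) := by
  rw [← prod_coe_sort s f, ← (s.orderIsoOfFin h).toEquiv.prod_comp]
  simp

def posFinsetGaps (n : ℕ) (I : {s : Finset ℕ // s.card = n ∧ ∀ k ∈ s, 0 < k}) (i : Fin n) : ℕ :=
  I.1.orderEmbOfFin I.2.1 i - (i + 1)

theorem orderEmbOfFin_eq_posFinsetGaps {n : ℕ}
    (I : {s : Finset ℕ // s.card = n ∧ ∀ k ∈ s, 0 < k}) (i : Fin n) :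
    I.1.orderEmbOfFin I.2.1 i = posFinsetGaps n I i + (i + 1) := by
  have := I.1.add_one_le_orderEmbOfFin I.2.1 I.2.2 i
  unfold posFinsetGaps
  omega

theorem posFinsetGaps_injective (n : ℕ) : Function.Injective (posFinsetGaps n) := by
  intro I J hIJ
  have he : ⇑(I.1.orderEmbOfFin I.2.1) = ⇑(J.1.orderEmbOfFin J.2.1) := funext fun i => by
    rw [orderEmbOfFin_eq_posFinsetGaps, orderEmbOfFin_eq_posFinsetGaps, hIJ]
  exact Subtype.ext <| coe_injective <| by
    rw [← I.1.range_orderEmbOfFin I.2.1, ← J.1.range_orderEmbOfFin J.2.1, he]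

noncomputable def upsilonFactor (d m k : ℕ) : ℝ :=
  1 / ((m + k) * (m + d - 1 + k))

theorem upsilonFactor_add (d m i k : ℕ) :
    upsilonFactor d m (i + k) = upsilonFactor d (m + i) k := by
  unfold upsilonFactor
  push_cast
  ring_nf

theorem upsilonFactor_succ_nonneg (d m k : ℕ) : 0 ≤ upsilonFactor d m (k + 1) := by
  have : (m : ℝ) + d - 1 + (k + 1 : ℕ) = m + d + k := by push_cast; ring
  unfold upsilonFactor
  rw [this]
  positivity

theorem summable_upsilonFactor_succ (d m : ℕ) : Summable fun k => upsilonFactor d m (k + 1) := by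
  have hsq : Summable fun k : ℕ => 1 / ((k + 1 : ℕ) : ℝ) ^ 2 :=
    (summable_nat_add_iff 1).2 (Real.summable_one_div_nat_pow.2 one_lt_two)
  refine (summable_nat_add_iff 1).1 <| hsq.of_nonneg_of_le (fun k => upsilonFactor_succ_nonneg ..)
    fun k => one_div_le_one_div_of_le (by positivity) ?_
  push_cast
  nlinarith [(m.cast_nonneg : (0 : ℝ) ≤ m), (d.cast_nonneg : (0 : ℝ) ≤ d),
    (k.cast_nonneg : (0 : ℝ) ≤ k)]

theorem upsilon_eq_tsum_prod_upsilonFactor (d m n : ℕ) :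
    upsilon d m n = ∑' I : {s : Finset ℕ // s.card = n ∧ ∀ k ∈ s, 0 < k},
      ∏ k ∈ I.1, upsilonFactor d m k :=
  rfl

theorem upsilon_one_eq_tsum (d m : ℕ) : upsilon d m 1 = ∑' k, upsilonFactor d m (k + 1) := by
  let single (k : ℕ) : {s : Finset ℕ // s.card = 1 ∧ ∀ j ∈ s, 0 < j} :=
    ⟨{k + 1}, card_singleton _, by simp⟩
  have hinj : Function.Injective single := fun a b hab => by simpa [single] using hab
  have hsurj : ∀ I, I ∈ Set.range single := by
    rintro ⟨s, hcard, hpos⟩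
    obtain ⟨a, rfl⟩ := card_eq_one.1 hcard
    have := hpos a (mem_singleton_self a)
    exact ⟨a - 1, Subtype.ext <| by simp only [single]; congr 1; omega⟩
  rw [upsilon_eq_tsum_prod_upsilonFactor, ← hinj.tsum_eq fun I _ => hsurj I]
  simp [single]

theorem prod_upsilonFactor_eq_prod_posFinsetGaps (d m : ℕ) {n : ℕ}
    (I : {s : Finset ℕ // s.card = n ∧ ∀ k ∈ s, 0 < k}) :
    ∏ k ∈ I.1, upsilonFactor d m k =
      ∏ i : Fin n, upsilonFactor d (m + i) (posFinsetGaps n I i + 1) := by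
  rw [I.1.prod_eq_prod_orderEmbOfFin I.2.1]
  refine prod_congr rfl fun i _ => ?_
  rw [orderEmbOfFin_eq_posFinsetGaps, ← upsilonFactor_add]
  congr 1
  omega

theorem upsilon_le_prod_upsilon_one_general (d m n : ℕ) :
    upsilon d m n ≤ ∏ j ∈ Finset.range n, upsilon d (m + j) 1 := by
  rw [upsilon_eq_tsum_prod_upsilonFactor]
  calc ∑' I : {s : Finset ℕ // s.card = n ∧ ∀ k ∈ s, 0 < k}, ∏ k ∈ I.1, upsilonFactor d m k
      = ∑' I, ∏ i : Fin n, upsilonFactor d (m + i) (posFinsetGaps n I i + 1) :=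
        tsum_congr (prod_upsilonFactor_eq_prod_posFinsetGaps d m)
    _ ≤ ∏ i : Fin n, ∑' k, upsilonFactor d (m + i) (k + 1) :=
        tsum_prod_comp_le_prod_tsum (g := fun (i : Fin n) k => upsilonFactor d (m + i) (k + 1))
          (fun i k => upsilonFactor_succ_nonneg ..)
          (fun i => summable_upsilonFactor_succ ..) (posFinsetGaps_injective n)
    _ = ∏ j ∈ Finset.range n, upsilon d (m + j) 1 := by
        simp only [← upsilon_one_eq_tsum]
        exact Fin.prod_univ_eq_prod_range (fun j => upsilon d (m + j) 1) n

theorem upsilon_le_prod_upsilon_one (d m n : ℕ) (hd : 2 ≤ d) :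
    upsilon d m n ≤ ∏ j ∈ Finset.range n, upsilon d (m + j) 1 :=
  upsilon_le_prod_upsilon_one_general d m n
end

section
/- For every complex z and integers m ≥ 0, d ≥ 2, the infinite product ∏_{n=1}^∞ (1 − z/((m+n)(m+n+d-1))) converges and equals Γ(m+d)Γ(m+1) / (Γ(m + (d+1)/2 + w) Γ(m + (d+1)/2 − w)), where w = √(((d-1)/2)² + z) (either square root). -/
open Filter Finset Complex Topology

lemma hasProd_zero_of_eq_zero {f : ℕ → ℂ} {k₀ : ℕ} (h : f k₀ = 0) : HasProd f 0 := by
  rw [HasProd]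
  refine tendsto_const_nhds.congr' ?_
  filter_upwards [eventually_ge_atTop ({k₀} : Finset ℕ)] with s hs
  exact (Finset.prod_eq_zero (hs (Finset.mem_singleton_self k₀)) h).symm


/-- The infinite product ∏_{n≥1} (1 − z/((m+n)(m+n+d−1))) converges to
Γ(m+d)Γ(m+1)/(Γ(m+(d+1)/2+w)Γ(m+(d+1)/2−w)) where w² = ((d−1)/2)² + z. -/
theorem upsilon_product_gamma (d m : ℕ) (hd : 2 ≤ d) (z w : ℂ)
    (hw : w ^ 2 = (((d : ℂ) - 1) / 2) ^ 2 + z) :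
    HasProd (fun k : ℕ => 1 - z / (((m : ℂ) + k + 1) * ((m : ℂ) + k + d)))
      (Complex.Gamma ((m : ℂ) + d) * Complex.Gamma ((m : ℂ) + 1) /
        (Complex.Gamma ((m : ℂ) + ((d : ℂ) + 1) / 2 + w) *
          Complex.Gamma ((m : ℂ) + ((d : ℂ) + 1) / 2 - w))) := by
  set a : ℂ := (m : ℂ) + ((d : ℂ) + 1) / 2 + w with ha
  set b : ℂ := (m : ℂ) + ((d : ℂ) + 1) / 2 - w with hb
  set f : ℕ → ℂ := fun k : ℕ => 1 - z / (((m : ℂ) + k + 1) * ((m : ℂ) + k + d)) with hf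
  -- nonvanishing of the denominators
  have hc : ∀ k : ℕ, ((m : ℂ) + k + 1) ≠ 0 := by
    intro k
    have : ((m : ℂ) + k + 1) = ((m + k + 1 : ℕ) : ℂ) := by push_cast; ring
    rw [this]
    exact Nat.cast_ne_zero.mpr (by omega)
  have he : ∀ k : ℕ, ((m : ℂ) + k + d) ≠ 0 := by
    intro k
    have : ((m : ℂ) + k + d) = ((m + k + d : ℕ) : ℂ) := by push_cast; ring
    rw [this]
    exact Nat.cast_ne_zero.mpr (by omega)
  -- the factorization of each term
  have hfk : ∀ k : ℕ, f k = ((a + k) * (b + k)) / (((m : ℂ) + k + 1) * ((m : ℂ) + k + d)) := by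
    intro k
    have hnum : (a + k) * (b + k) = ((m : ℂ) + k + 1) * ((m : ℂ) + k + d) - z := by
      rw [ha, hb]; linear_combination -hw
    rw [hf, hnum, sub_div, div_self (mul_ne_zero (hc k) (he k))]
  by_cases hzero : (∃ k : ℕ, a + k = 0) ∨ (∃ k : ℕ, b + k = 0)
  · have hR : Complex.Gamma ((m : ℂ) + d) * Complex.Gamma ((m : ℂ) + 1) /
        (Complex.Gamma a * Complex.Gamma b) = 0 := by
      rcases hzero with ⟨k₀, hk⟩ | ⟨k₀, hk⟩
      · rw [eq_neg_of_add_eq_zero_left hk, Complex.Gamma_neg_nat_eq_zero, zero_mul, div_zero]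
      · rw [eq_neg_of_add_eq_zero_left hk, Complex.Gamma_neg_nat_eq_zero, mul_zero, div_zero]
    rw [hR]
    rcases hzero with ⟨k₀, hk⟩ | ⟨k₀, hk⟩
    · exact hasProd_zero_of_eq_zero (k₀ := k₀) (by rw [hfk k₀, hk, zero_mul, zero_div])
    · exact hasProd_zero_of_eq_zero (k₀ := k₀) (by rw [hfk k₀, hk, mul_zero, zero_div])
  · push_neg at hzero
    obtain ⟨hA, hB⟩ := hzero
    have hGa : Complex.Gamma a ≠ 0 := Complex.Gamma_ne_zero fun j hj => hA j (by rw [hj]; ring)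
    have hGb : Complex.Gamma b ≠ 0 := Complex.Gamma_ne_zero fun j hj => hB j (by rw [hj]; ring)
    set g : ℕ → ℂ := fun k => -z / (((m : ℂ) + k + 1) * ((m : ℂ) + k + d)) with hg
    have hgnorm : ∀ k : ℕ, ‖g k‖ ≤ ‖z‖ * (1 / ((k : ℝ) + 1) ^ 2) := by
      intro k
      have h1 : ‖((m : ℂ) + k + 1)‖ = (m : ℝ) + k + 1 := by
        rw [show ((m : ℂ) + k + 1) = ((m + k + 1 : ℕ) : ℂ) by push_cast; ring,
          Complex.norm_natCast]
        push_cast; ring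
      have h2 : ‖((m : ℂ) + k + d)‖ = (m : ℝ) + k + d := by
        rw [show ((m : ℂ) + k + d) = ((m + k + d : ℕ) : ℂ) by push_cast; ring,
          Complex.norm_natCast]
        push_cast; ring
      rw [hg]
      simp only [norm_div, norm_neg, norm_mul, h1, h2, mul_one_div]
      have hd' : (2 : ℝ) ≤ d := by exact_mod_cast hd
      have hm : (0 : ℝ) ≤ m := Nat.cast_nonneg m
      have hk : (0 : ℝ) ≤ k := Nat.cast_nonneg k
      exact div_le_div_of_nonneg_left (norm_nonneg z) (by positivity) (by nlinarith)
    have hsum : Summable (fun k => ‖g k‖) := by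
      refine Summable.of_nonneg_of_le (fun k => norm_nonneg _) hgnorm ?_
      refine Summable.mul_left _ ?_
      have h2 : Summable (fun n : ℕ => 1 / (n : ℝ) ^ 2) := Real.summable_one_div_nat_pow.mpr one_lt_two
      have := (summable_nat_add_iff 1).mpr h2
      refine this.congr fun n => ?_
      push_cast; ring_nf
    have hGsum : Summable g := Summable.of_norm hsum
    have hfg : ∀ k, f k = 1 + g k := by
      intro k; rw [hf, hg]; simp only [neg_div]; ring
    have hfne : ∀ k, f k ≠ 0 := fun k => by
      rw [hfk k]
      exact div_ne_zero (mul_ne_zero (hA k) (hB k)) (mul_ne_zero (hc k) (he k))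
    have hlog : Summable (fun k => Complex.log (f k)) := by
      refine Summable.of_norm_bounded_eventually (g := fun k => 3 / 2 * ‖g k‖) (hsum.mul_left _) ?_
      rw [Nat.cofinite_eq_atTop]
      filter_upwards [hsum.tendsto_atTop_zero.eventually_le_const
        (by norm_num : (0 : ℝ) < 1 / 2)] with k hk
      rw [hfg k]
      exact Complex.norm_log_one_add_half_le_self hk
    have hprod : HasProd f (Complex.exp (∑' k, Complex.log (f k))) := by
      refine HasProd.congr_fun (hlog.hasSum.cexp) fun k => ?_
      simp only [Function.comp_apply]
      exact (Complex.exp_log (hfne k)).symm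
    have key : ∀ n : ℕ, 1 ≤ n → ∏ k ∈ range (n + 1), f k =
        Complex.GammaSeq ((m : ℂ) + 1) n * Complex.GammaSeq ((m : ℂ) + d) n /
          (Complex.GammaSeq a n * Complex.GammaSeq b n) := by
      intro n hn
      have hn' : (n : ℂ) ≠ 0 := Nat.cast_ne_zero.mpr (by omega)
      have hfact : ((n.factorial : ℂ)) ≠ 0 := Nat.cast_ne_zero.mpr n.factorial_ne_zero
      have hPa : (∏ j ∈ range (n + 1), (a + j)) ≠ 0 :=
        Finset.prod_ne_zero_iff.mpr fun j _ => hA j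
      have hPb : (∏ j ∈ range (n + 1), (b + j)) ≠ 0 :=
        Finset.prod_ne_zero_iff.mpr fun j _ => hB j
      have hPc : (∏ j ∈ range (n + 1), ((m : ℂ) + 1 + j)) ≠ 0 :=
        Finset.prod_ne_zero_iff.mpr fun j _ => by
          rw [show (m : ℂ) + 1 + j = (m : ℂ) + j + 1 by ring]; exact hc j
      have hPe : (∏ j ∈ range (n + 1), ((m : ℂ) + d + j)) ≠ 0 :=
        Finset.prod_ne_zero_iff.mpr fun j _ => by
          rw [show (m : ℂ) + d + j = (m : ℂ) + j + d by ring]; exact he j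
      have hna : (n : ℂ) ^ a ≠ 0 := fun h => hn' ((Complex.cpow_eq_zero_iff _ _).mp h).1
      have hnb : (n : ℂ) ^ b ≠ 0 := fun h => hn' ((Complex.cpow_eq_zero_iff _ _).mp h).1
      have hpow : (n : ℂ) ^ ((m : ℂ) + 1) * (n : ℂ) ^ ((m : ℂ) + (d : ℂ)) =
          (n : ℂ) ^ a * (n : ℂ) ^ b := by
        rw [← Complex.cpow_add _ _ hn', ← Complex.cpow_add _ _ hn']
        congr 1
        rw [ha, hb]; ring
      have hprodform : ∏ k ∈ range (n + 1), f k =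
          (∏ j ∈ range (n + 1), (a + j)) * (∏ j ∈ range (n + 1), (b + j)) /
            ((∏ j ∈ range (n + 1), ((m : ℂ) + 1 + j)) *
              (∏ j ∈ range (n + 1), ((m : ℂ) + d + j))) := by
        rw [← Finset.prod_mul_distrib, ← Finset.prod_mul_distrib, ← Finset.prod_div_distrib]
        refine Finset.prod_congr rfl fun k _ => ?_
        rw [hfk k]
        congr 1
        ring
      rw [hprodform]
      simp only [Complex.GammaSeq]
      rw [div_mul_div_comm, div_mul_div_comm, div_div_div_eq, div_eq_div_iff
        (mul_ne_zero hPc hPe)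
        (mul_ne_zero (mul_ne_zero hPc hPe)
          (mul_ne_zero (mul_ne_zero hna hfact) (mul_ne_zero hnb hfact)))]
      linear_combination (-((∏ j ∈ range (n + 1), (a + (j : ℂ))) *
        (∏ j ∈ range (n + 1), (b + (j : ℂ))) *
        (∏ j ∈ range (n + 1), ((m : ℂ) + 1 + (j : ℂ))) *
        (∏ j ∈ range (n + 1), ((m : ℂ) + (d : ℂ) + (j : ℂ))) *
        ((n.factorial : ℂ)) ^ 2)) * hpow
    have hGlim : Tendsto (fun n => Complex.GammaSeq ((m : ℂ) + 1) n *
        Complex.GammaSeq ((m : ℂ) + d) n /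
          (Complex.GammaSeq a n * Complex.GammaSeq b n)) atTop
        (𝓝 (Complex.Gamma ((m : ℂ) + 1) * Complex.Gamma ((m : ℂ) + d) /
          (Complex.Gamma a * Complex.Gamma b))) :=
      (((Complex.GammaSeq_tendsto_Gamma _).mul (Complex.GammaSeq_tendsto_Gamma _)).div
        ((Complex.GammaSeq_tendsto_Gamma a).mul (Complex.GammaSeq_tendsto_Gamma b))
        (mul_ne_zero hGa hGb))
    have hT : Tendsto (fun n => ∏ k ∈ range (n + 1), f k) atTop
        (𝓝 (Complex.Gamma ((m : ℂ) + 1) * Complex.Gamma ((m : ℂ) + d) /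
          (Complex.Gamma a * Complex.Gamma b))) := by
      refine hGlim.congr' ?_
      filter_upwards [eventually_ge_atTop 1] with n hn
      exact (key n hn).symm
    have hT2 : Tendsto (fun n => ∏ k ∈ range (n + 1), f k) atTop
        (𝓝 (Complex.exp (∑' k, Complex.log (f k)))) :=
      hprod.tendsto_prod_nat.comp (tendsto_add_atTop_nat 1)
    have heq : Complex.exp (∑' k, Complex.log (f k)) =
        Complex.Gamma ((m : ℂ) + 1) * Complex.Gamma ((m : ℂ) + d) /
          (Complex.Gamma a * Complex.Gamma b) := tendsto_nhds_unique hT2 hT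
    rw [heq] at hprod
    rw [mul_comm (Complex.Gamma ((m : ℂ) + d))]
    exact hprod
end

section
/- Fix integers m ≥ 0, d ≥ 2 and set μ_{m,i} = i(i+m+d-1). Define q_{m,n}(x) = ∏_{i=1}^n (μ_{m,i} − x)/μ_{m,i}. Then q_{m,n}(x) = Σ_{j=0}^n (−1)^j ∏_{i=1}^j (x − μ_{m,i-1})/μ_{m,i}. -/
/-!
With `P j = ∏_{i<j} (μ_{i+1} - x)/μ_{i+1}`, the `j`-th summand for `j ≥ 1` equals `P j - P (j-1)`:
since `μ_0 = 0` its first factor is `x/μ_1`, and flipping the signs of the remaining factors gives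
`-(x/μ_j) P (j-1) = P j - P (j-1)`. So the sum telescopes to `P n`.
-/

open Finset

section Telescoping

variable {K : Type*} [Field K] (μ : ℕ → K) (x : K)

theorem neg_one_pow_succ_mul_prod_sub_div (hμ₀ : μ 0 = 0) (j : ℕ) :
    (-1) ^ (j + 1) * ∏ i ∈ range (j + 1), (x - μ i) / μ (i + 1)
      = -(x / μ (j + 1)) * ∏ i ∈ range j, (μ (i + 1) - x) / μ (i + 1) := by
  have hflip : ∏ i ∈ range j, (μ (i + 1) - x) = (-1) ^ j * ∏ i ∈ range j, (x - μ (i + 1)) := by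
    simp only [← neg_sub x (μ _), prod_neg, card_range]
  simp only [prod_div_distrib]
  rw [prod_range_succ' (fun i => x - μ i), prod_range_succ (fun i => μ (i + 1)), hμ₀, sub_zero,
    hflip]
  ring

theorem prod_range_sub_div_eq_sum (hμ₀ : μ 0 = 0) (hμ : ∀ i, μ (i + 1) ≠ 0) (n : ℕ) :
    ∏ i ∈ range n, (μ (i + 1) - x) / μ (i + 1)
      = ∑ j ∈ range (n + 1), (-1) ^ j * ∏ i ∈ range j, (x - μ i) / μ (i + 1) := by
  set P : ℕ → K := fun j => ∏ i ∈ range j, (μ (i + 1) - x) / μ (i + 1)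
  have hstep : ∀ j, (-1) ^ (j + 1) * ∏ i ∈ range (j + 1), (x - μ i) / μ (i + 1)
      = P (j + 1) - P j := by
    intro j
    rw [neg_one_pow_succ_mul_prod_sub_div μ x hμ₀]
    simp only [P, prod_range_succ]
    rw [sub_div, div_self (hμ j)]
    ring
  rw [sum_range_succ', sum_congr rfl fun j _ => hstep j, sum_range_sub]
  simp [P]

end Telescoping

/-- With μ_{m,i} = i(i+m+d-1), the interpolating polynomial
q_{m,n}(x) = ∏_{i=1}^n (μ_{m,i} − x)/μ_{m,i} equals
Σ_{j=0}^n (−1)^j ∏_{i=1}^j (x − μ_{m,i-1})/μ_{m,i}. -/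
theorem q_mn_expansion (d m n : ℕ) (hd : 2 ≤ d) (x : ℝ) :
    (∏ i ∈ Finset.range n,
        (((i + 1) * (i + 1 + m + d - 1) : ℝ) - x) / ((i + 1) * (i + 1 + m + d - 1) : ℝ))
      = ∑ j ∈ Finset.range (n + 1), (-1 : ℝ) ^ j *
          ∏ i ∈ Finset.range j,
            (x - (i * (i + m + d - 1) : ℝ)) / ((i + 1) * (i + 1 + m + d - 1) : ℝ) := by
  have hμ : ∀ i : ℕ, ((i + 1) * (i + 1 + m + d - 1) : ℝ) ≠ 0 := by
    intro i
    have hd' : (2 : ℝ) ≤ d := by exact_mod_cast hd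
    have hi : (0 : ℝ) ≤ i := i.cast_nonneg
    have hm : (0 : ℝ) ≤ m := m.cast_nonneg
    exact mul_ne_zero (by positivity) (by linarith)
  simpa using prod_range_sub_div_eq_sum (fun i : ℕ => (i * (i + m + d - 1) : ℝ)) x
    (by simp) (fun i => by simpa using hμ i) n
end

section
/- Fix integers m ≥ 0, d ≥ 2, n ≥ 0, and set μ_{m,i} = i(i+m+d-1), q_{m,n}(x) = ∏_{i=1}^n (μ_{m,i} − x)/μ_{m,i}. Then for all real x ≥ μ_{m,n}, (−1)^n q_{m,n}(x) ≥ 0, and for all x ≥ μ_{m,n+1}, (−1)^n q_{m,n}(x) ≤ ∏_{i=1}^{n+1} (x − μ_{m,i-1})/μ_{m,i}. -/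
/-! Flipping the signs, `(-1)^n q_{m,n}(x) = ∏_{i=1}^n (x - μ_{m,i}) / μ_{m,i}`, a product of
nonnegative factors once `x ≥ μ_{m,n}`. Since `μ_{m,0} = 0`, the right-hand side of the second
inequality is the same product times `x / μ_{m,n+1} ≥ 1`. -/

open Finset

section NodeProducts

variable {α : Type*} [Field α]

theorem neg_one_pow_mul_prod_sub_div (a : ℕ → α) (x : α) (n : ℕ) :
    (-1) ^ n * ∏ i ∈ range n, (a i - x) / a i = ∏ i ∈ range n, (x - a i) / a i := by
  have h := prod_neg (s := range n) fun i => (a i - x) / a i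
  rw [card_range] at h
  rw [← h]
  exact prod_congr rfl fun i _ => by ring

theorem prod_range_succ_sub_div_succ {a : ℕ → α} (h0 : a 0 = 0) (x : α) (n : ℕ) :
    ∏ i ∈ range (n + 1), (x - a i) / a (i + 1)
      = (∏ i ∈ range n, (x - a (i + 1)) / a (i + 1)) * (x / a (n + 1)) := by
  rw [prod_div_distrib, prod_div_distrib, prod_range_succ', prod_range_succ, h0, sub_zero,
    mul_div_mul_comm]

variable [LinearOrder α] [IsStrictOrderedRing α] {μ : ℕ → α} {x : α} {n : ℕ}

theorem prod_sub_div_nonneg (hμ : Monotone μ) (h0 : μ 0 = 0) (hx : μ n ≤ x) :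
    0 ≤ ∏ i ∈ range n, (x - μ (i + 1)) / μ (i + 1) := by
  refine prod_nonneg fun i hi => div_nonneg ?_ (h0 ▸ hμ (Nat.zero_le _))
  exact sub_nonneg.2 ((hμ (mem_range.1 hi)).trans hx)

theorem neg_one_pow_mul_prod_nonneg (hμ : Monotone μ) (h0 : μ 0 = 0) (hx : μ n ≤ x) :
    0 ≤ (-1) ^ n * ∏ i ∈ range n, (μ (i + 1) - x) / μ (i + 1) := by
  rw [neg_one_pow_mul_prod_sub_div (fun i => μ (i + 1))]
  exact prod_sub_div_nonneg hμ h0 hx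

theorem neg_one_pow_mul_prod_le (hμ : Monotone μ) (h0 : μ 0 = 0) (hpos : 0 < μ (n + 1))
    (hx : μ (n + 1) ≤ x) :
    (-1) ^ n * ∏ i ∈ range n, (μ (i + 1) - x) / μ (i + 1)
      ≤ ∏ i ∈ range (n + 1), (x - μ i) / μ (i + 1) := by
  rw [neg_one_pow_mul_prod_sub_div (fun i => μ (i + 1)), prod_range_succ_sub_div_succ h0]
  exact le_mul_of_one_le_right (prod_sub_div_nonneg hμ h0 (hμ n.le_succ |>.trans hx))
    ((one_le_div hpos).2 hx)

end NodeProducts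

/-- Inequalities for the interpolating polynomials q_{m,n} with nodes
μ_{m,i} = i(i+m+d-1): for x ≥ μ_{m,n}, (−1)^n q_{m,n}(x) ≥ 0, and for
x ≥ μ_{m,n+1}, (−1)^n q_{m,n}(x) ≤ ∏_{i=1}^{n+1}(x − μ_{m,i-1})/μ_{m,i}. -/
theorem q_mn_inequalities (d m n : ℕ) (hd : 2 ≤ d) :
    (∀ x : ℝ, (n * (n + m + d - 1) : ℝ) ≤ x →
      0 ≤ (-1 : ℝ) ^ n * ∏ i ∈ Finset.range n,
        (((i + 1) * (i + 1 + m + d - 1) : ℝ) - x) / ((i + 1) * (i + 1 + m + d - 1) : ℝ))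
    ∧
    (∀ x : ℝ, ((n + 1) * (n + 1 + m + d - 1) : ℝ) ≤ x →
      (-1 : ℝ) ^ n * (∏ i ∈ Finset.range n,
          (((i + 1) * (i + 1 + m + d - 1) : ℝ) - x) / ((i + 1) * (i + 1 + m + d - 1) : ℝ))
        ≤ ∏ i ∈ Finset.range (n + 1),
            (x - (i * (i + m + d - 1) : ℝ)) / ((i + 1) * (i + 1 + m + d - 1) : ℝ)) := by
  set μ : ℕ → ℝ := fun i => i * (i + m + d - 1) with hμ_def
  have hd' : (2 : ℝ) ≤ d := by exact_mod_cast hd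
  have hm : (0 : ℝ) ≤ m := m.cast_nonneg
  have hμ : Monotone μ := monotone_nat_of_le_succ fun i => by
    simp only [hμ_def, Nat.cast_add, Nat.cast_one]
    nlinarith [i.cast_nonneg (α := ℝ)]
  have h0 : μ 0 = 0 := by simp [hμ_def]
  have hpos : 0 < μ (n + 1) := by
    simp only [hμ_def, Nat.cast_add, Nat.cast_one]
    nlinarith [n.cast_nonneg (α := ℝ)]
  refine ⟨fun x hx => ?_, fun x hx => ?_⟩
  · have h := neg_one_pow_mul_prod_nonneg hμ h0 hx
    push_cast [hμ_def] at h
    exact h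
  · have h := neg_one_pow_mul_prod_le hμ h0 hpos (by push_cast [hμ_def]; exact hx)
    push_cast [hμ_def] at h
    exact h
end

section
/- Let X, Y be positive semidefinite operators on a finite-dimensional Hilbert space. Then for every n ≥ 1, the sum of the n largest singular values of X − Y is at most the sum of the n largest eigenvalues of X + Y. -/
open scoped BigOperators Matrix ComplexOrder
open scoped MatrixOrder

open Matrix in
private lemma kf_diag_entry {N : ℕ} (P : Matrix (Fin N) (Fin N) ℂ) (f : Fin N → ℝ) (i : Fin N) :
    (star P * Matrix.diagonal (fun j => (f j : ℂ)) * P) i i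
      = ((∑ j, f j * Complex.normSq (P j i) : ℝ) : ℂ) := by
  push_cast
  rw [Matrix.mul_apply]
  simp only [Matrix.mul_diagonal, Matrix.star_apply, Complex.star_def]
  refine Finset.sum_congr rfl fun j _ => ?_
  rw [mul_comm ((starRingEnd ℂ) (P j i)) ((f j : ℂ)), mul_assoc]
  congr 1
  rw [← Complex.normSq_eq_conj_mul_self]

private lemma kf_col {N : ℕ} (P : Matrix (Fin N) (Fin N) ℂ) (h : star P * P = 1) (i : Fin N) :
    ∑ j, Complex.normSq (P j i) = 1 := by
  have h1 : (star P * P) i i = 1 := by rw [h]; simp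
  rw [Matrix.mul_apply] at h1
  have : (((∑ j, Complex.normSq (P j i) : ℝ)) : ℂ) = 1 := by
    push_cast
    rw [← h1]
    refine (Finset.sum_congr rfl fun j _ => ?_).symm
    rw [Matrix.star_apply, Complex.star_def, ← Complex.normSq_eq_conj_mul_self]
  exact_mod_cast this

private lemma kf_row {N : ℕ} (P : Matrix (Fin N) (Fin N) ℂ) (h : P * star P = 1) (j : Fin N) :
    ∑ i, Complex.normSq (P j i) = 1 := by
  have h1 : (P * star P) j j = 1 := by rw [h]; simp
  rw [Matrix.mul_apply] at h1
  have : (((∑ i, Complex.normSq (P j i) : ℝ)) : ℂ) = 1 := by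
    push_cast
    rw [← h1]
    refine (Finset.sum_congr rfl fun i _ => ?_).symm
    rw [Matrix.star_apply, Complex.star_def, Complex.mul_conj]
  exact_mod_cast this

/-- A doubly-substochastic weight bound: if `0 ≤ e ≤ 1` and `∑ e = n`, then
`∑ μ k * e k` is at most the sum of `μ` over some set of cardinality `n`. -/
private lemma kf_substochastic {N n : ℕ} (hn : 1 ≤ n) (hn' : n ≤ N)
    (μ e : Fin N → ℝ) (he0 : ∀ k, 0 ≤ e k) (he1 : ∀ k, e k ≤ 1)
    (hes : ∑ k, e k = n) :
    ∃ t : Finset (Fin N), t.card = n ∧ ∑ k, μ k * e k ≤ ∑ k ∈ t, μ k := by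
  classical
  have hne : (Finset.powersetCard n (Finset.univ : Finset (Fin N))).Nonempty := by
    rw [Finset.powersetCard_nonempty]
    simpa using hn'
  obtain ⟨t, htmem, htmax⟩ :=
    Finset.exists_max_image _ (fun t : Finset (Fin N) => ∑ k ∈ t, μ k) hne
  rw [Finset.mem_powersetCard] at htmem
  obtain ⟨-, htmem⟩ := htmem
  refine ⟨t, htmem, ?_⟩
  have htne : t.Nonempty := by
    rw [← Finset.card_pos, htmem]; omega
  -- swap property
  have hswap : ∀ k ∈ t, ∀ l ∉ t, μ l ≤ μ k := by
    intro k hk l hl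
    have hlk : l ∉ t.erase k := fun h => hl (Finset.mem_of_mem_erase h)
    have hcard : (insert l (t.erase k)).card = n := by
      rw [Finset.card_insert_of_notMem hlk, Finset.card_erase_of_mem hk, htmem]
      omega
    have := htmax (insert l (t.erase k))
      (Finset.mem_powersetCard.mpr ⟨Finset.subset_univ _, hcard⟩)
    rw [Finset.sum_insert hlk] at this
    have herase : ∑ k' ∈ t.erase k, μ k' = (∑ k' ∈ t, μ k') - μ k := by
      rw [← Finset.add_sum_erase t μ hk]; ring
    rw [herase] at this
    linarith
  obtain ⟨k₀, hk₀, hk₀min⟩ := Finset.exists_min_image t μ htne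
  set θ := μ k₀ with hθ
  have key : ∑ k, (μ k - θ) * (e k - if k ∈ t then 1 else 0) ≤ 0 := by
    refine Finset.sum_nonpos fun k _ => ?_
    by_cases hk : k ∈ t
    · simp only [hk, if_true]
      exact mul_nonpos_of_nonneg_of_nonpos (by linarith [hk₀min k hk]) (by linarith [he1 k])
    · simp only [hk, if_false]
      exact mul_nonpos_of_nonpos_of_nonneg (by linarith [hswap k₀ hk₀ k hk]) (by linarith [he0 k])
  have hind : ∑ k, (if k ∈ t then (1:ℝ) else 0) = n := by
    rw [Finset.sum_ite_mem, Finset.univ_inter, Finset.sum_const, htmem]; simp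
  have hsum_t : ∑ k, μ k * (if k ∈ t then (1:ℝ) else 0) = ∑ k ∈ t, μ k := by
    simp [Finset.sum_ite_mem, Finset.univ_inter, mul_ite]
  have expand : ∑ k, (μ k - θ) * (e k - if k ∈ t then 1 else 0)
      = (∑ k, μ k * e k) - (∑ k ∈ t, μ k) - θ * (∑ k, e k) + θ * n := by
    rw [← hsum_t]
    rw [Finset.mul_sum, ← hind, Finset.mul_sum]
    rw [← Finset.sum_sub_distrib, ← Finset.sum_sub_distrib, ← Finset.sum_add_distrib]
    refine Finset.sum_congr rfl fun k _ => by ring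
  rw [expand, hes] at key
  linarith

/-- Singular values of M: the eigenvalues of |M| = √(MᴴM). -/
noncomputable def singularValues {N : ℕ} (M : Matrix (Fin N) (Fin N) ℂ) : Fin N → ℝ :=
  (Matrix.nonneg_iff_posSemidef.mp (CFC.sqrt_nonneg (Mᴴ * M))).1.eigenvalues

/-- For positive semidefinite X, Y, the sum of the n largest singular values of
X − Y is at most the sum of the n largest eigenvalues of X + Y. -/
theorem ky_fan_difference_le_sum (N : ℕ) (X Y : Matrix (Fin N) (Fin N) ℂ)
    (hX : X.PosSemidef) (hY : Y.PosSemidef)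
    (n : ℕ) (hn : 1 ≤ n) (hn' : n ≤ N) :
    ∀ s : Finset (Fin N), s.card = n →
      ∃ t : Finset (Fin N), t.card = n ∧
        ∑ i ∈ s, singularValues (X - Y) i
          ≤ ∑ i ∈ t, (hX.1.add hY.1).eigenvalues i := by
  classical
  intro s hs
  have hA : (X - Y).IsHermitian := hX.1.sub hY.1
  have hM : (X + Y).IsHermitian := hX.1.add hY.1
  set d : Fin N → ℝ := hA.eigenvalues with hd_def
  set μ : Fin N → ℝ := hM.eigenvalues with hμ_def
  set U : Matrix (Fin N) (Fin N) ℂ := (hA.eigenvectorUnitary : Matrix (Fin N) (Fin N) ℂ) with hU_def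
  set W : Matrix (Fin N) (Fin N) ℂ := (hM.eigenvectorUnitary : Matrix (Fin N) (Fin N) ℂ) with hW_def
  have hU1 : star U * U = 1 := Matrix.mem_unitaryGroup_iff'.mp (hA.eigenvectorUnitary).2
  have hU2 : U * star U = 1 := Matrix.mem_unitaryGroup_iff.mp (hA.eigenvectorUnitary).2
  have hW1 : star W * W = 1 := Matrix.mem_unitaryGroup_iff'.mp (hM.eigenvectorUnitary).2
  have hW2 : W * star W = 1 := Matrix.mem_unitaryGroup_iff.mp (hM.eigenvectorUnitary).2
  have hAdiag : star U * (X - Y) * U = Matrix.diagonal (fun j => (d j : ℂ)) := by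
    simpa [Function.comp_def] using Matrix.IsHermitian.conjStarAlgAut_star_eigenvectorUnitary hA
  have hMdiag : star W * (X + Y) * W = Matrix.diagonal (fun k => (μ k : ℂ)) := by
    simpa [Function.comp_def] using Matrix.IsHermitian.conjStarAlgAut_star_eigenvectorUnitary hM
  have hAspec : X - Y = U * Matrix.diagonal (fun j => (d j : ℂ)) * star U := by
    rw [← hAdiag]
    calc X - Y = (U * star U) * (X - Y) * (U * star U) := by rw [hU2]; simp
      _ = U * (star U * (X - Y) * U) * star U := by noncomm_ring
  have hMspec : X + Y = W * Matrix.diagonal (fun k => (μ k : ℂ)) * star W := by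
    rw [← hMdiag]
    calc X + Y = (W * star W) * (X + Y) * (W * star W) := by rw [hW2]; simp
      _ = W * (star W * (X + Y) * W) * star W := by noncomm_ring
  -- the square root of (X-Y)ᴴ(X-Y) is U |D| Uᴴ
  set C : Matrix (Fin N) (Fin N) ℂ :=
    U * Matrix.diagonal (fun j => ((|d j| : ℝ) : ℂ)) * star U with hC_def
  have hCpsd : C.PosSemidef := by
    have hdiagpsd : (Matrix.diagonal (fun j => ((|d j| : ℝ) : ℂ))).PosSemidef := by
      rw [Matrix.posSemidef_diagonal_iff]
      intro j
      exact Complex.zero_le_real.mpr (abs_nonneg (d j))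
    have := hdiagpsd.mul_mul_conjTranspose_same U
    simpa [Matrix.star_eq_conjTranspose, hC_def] using this
  have hconj_mul : ∀ f g : Fin N → ℂ,
      (U * Matrix.diagonal f * star U) * (U * Matrix.diagonal g * star U)
        = U * Matrix.diagonal (fun j => f j * g j) * star U := by
    intro f g
    calc (U * Matrix.diagonal f * star U) * (U * Matrix.diagonal g * star U)
        = U * Matrix.diagonal f * (star U * U) * Matrix.diagonal g * star U := by noncomm_ring
      _ = U * (Matrix.diagonal f * Matrix.diagonal g) * star U := by
          rw [hU1]; noncomm_ring
      _ = U * Matrix.diagonal (fun j => f j * g j) * star U := by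
          rw [Matrix.diagonal_mul_diagonal]
  have hCsq : C ^ 2 = (X - Y)ᴴ * (X - Y) := by
    have hherm : (X - Y)ᴴ = X - Y := hA
    rw [hherm, pow_two, hC_def]
    conv_rhs => rw [hAspec]
    rw [hconj_mul, hconj_mul]
    have hfun : (fun j => ((|d j| : ℝ) : ℂ) * ((|d j| : ℝ) : ℂ))
        = fun j => ((d j : ℝ) : ℂ) * ((d j : ℝ) : ℂ) := by
      funext j
      rw [← Complex.ofReal_mul, ← Complex.ofReal_mul, abs_mul_abs_self]
    rw [hfun]
  have hsqrt_eq : CFC.sqrt ((X - Y)ᴴ * (X - Y)) = C :=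
    CFC.sqrt_unique (by rw [← pow_two]; exact hCsq) hCpsd.nonneg
  set hB1 : (CFC.sqrt ((X - Y)ᴴ * (X - Y))).IsHermitian :=
    (Matrix.nonneg_iff_posSemidef.mp (CFC.sqrt_nonneg ((X - Y)ᴴ * (X - Y)))).1 with hB1_def
  set V : Matrix (Fin N) (Fin N) ℂ := (hB1.eigenvectorUnitary : Matrix (Fin N) (Fin N) ℂ) with hV_def
  have hV1 : star V * V = 1 := Matrix.mem_unitaryGroup_iff'.mp (hB1.eigenvectorUnitary).2
  have hV2 : V * star V = 1 := Matrix.mem_unitaryGroup_iff.mp (hB1.eigenvectorUnitary).2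
  have hBdiag : star V * CFC.sqrt ((X - Y)ᴴ * (X - Y)) * V
      = Matrix.diagonal (fun i => (hB1.eigenvalues i : ℂ)) := by
    have h := Matrix.IsHermitian.conjStarAlgAut_star_eigenvectorUnitary hB1
    rw [Unitary.conjStarAlgAut_star_apply] at h
    exact h
  -- unitary combinations
  set G : Matrix (Fin N) (Fin N) ℂ := star U * V with hG_def
  set H : Matrix (Fin N) (Fin N) ℂ := star W * U with hH_def
  have hG1 : star G * G = 1 := by
    rw [hG_def, star_mul, star_star, Matrix.mul_assoc, ← Matrix.mul_assoc U (star U), hU2,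
        Matrix.one_mul, hV1]
  have hG2 : G * star G = 1 := by
    rw [hG_def, star_mul, star_star, Matrix.mul_assoc, ← Matrix.mul_assoc V (star V), hV2,
        Matrix.one_mul, hU1]
  have hH1 : star H * H = 1 := by
    rw [hH_def, star_mul, star_star, Matrix.mul_assoc, ← Matrix.mul_assoc W (star W), hW2,
        Matrix.one_mul, hU1]
  have hH2 : H * star H = 1 := by
    rw [hH_def, star_mul, star_star, Matrix.mul_assoc, ← Matrix.mul_assoc U (star U), hU2,
        Matrix.one_mul, hW1]
  -- singular values in terms of G
  have hsv : ∀ i, singularValues (X - Y) i = ∑ j, |d j| * Complex.normSq (G j i) := by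
    intro i
    have h1 : (star V * C * V) i i = ((hB1.eigenvalues i : ℝ) : ℂ) := by
      rw [← hsqrt_eq, hBdiag]; simp
    rw [hC_def] at h1
    have h2 : star V * (U * Matrix.diagonal (fun j => ((|d j| : ℝ) : ℂ)) * star U) * V
        = star G * Matrix.diagonal (fun j => ((|d j| : ℝ) : ℂ)) * G := by
      rw [hG_def, star_mul, star_star]
      noncomm_ring
    rw [h2, kf_diag_entry] at h1
    have : hB1.eigenvalues i = ∑ j, |d j| * Complex.normSq (G j i) := by exact_mod_cast h1.symm
    simpa [singularValues] using this
  -- diagonal entries of conjugated X and Y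
  set x : Fin N → ℝ := fun j => ((star U * X * U) j j).re with hx_def
  set y : Fin N → ℝ := fun j => ((star U * Y * U) j j).re with hy_def
  have hdiag_nonneg : ∀ (Z : Matrix (Fin N) (Fin N) ℂ), Z.PosSemidef →
      ∀ j, 0 ≤ ((star U * Z * U) j j).re := by
    intro Z hZ j
    have hZU : (star U * Z * U).PosSemidef := by
      have := hZ.conjTranspose_mul_mul_same U
      simpa [Matrix.star_eq_conjTranspose] using this
    have h0 := hZU.re_dotProduct_nonneg (Pi.single j 1)
    have hsingle : star (Pi.single j (1:ℂ)) = (Pi.single j 1 : Fin N → ℂ) := by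
      funext i
      rcases eq_or_ne i j with h | h
      · subst h; simp
      · simp [Pi.single_eq_of_ne h]
    have heq : dotProduct (star (Pi.single j 1)) ((star U * Z * U) *ᵥ Pi.single j 1)
        = (star U * Z * U) j j := by
      rw [hsingle]
      simp [single_dotProduct, Matrix.mulVec_single]
    rw [heq] at h0
    exact h0
  have hx0 : ∀ j, 0 ≤ x j := fun j => hdiag_nonneg X hX j
  have hy0 : ∀ j, 0 ≤ y j := fun j => hdiag_nonneg Y hY j
  have hd_eq : ∀ j, d j = x j - y j := by
    intro j
    have h1 : (star U * (X - Y) * U) j j = ((d j : ℝ) : ℂ) := by rw [hAdiag]; simp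
    have h2 : (star U * (X - Y) * U) j j
        = (star U * X * U) j j - (star U * Y * U) j j := by
      rw [Matrix.mul_sub, Matrix.sub_mul]
      simp [Matrix.sub_apply]
    rw [h2] at h1
    have := congrArg Complex.re h1
    simpa [hx_def, hy_def] using this.symm
  set q : Fin N → ℝ := fun j => ((star U * (X + Y) * U) j j).re with hq_def
  have hq_eq : ∀ j, q j = x j + y j := by
    intro j
    have h2 : (star U * (X + Y) * U) j j
        = (star U * X * U) j j + (star U * Y * U) j j := by
      rw [Matrix.mul_add, Matrix.add_mul]
      simp [Matrix.add_apply]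
    simp [hq_def, h2, hx_def, hy_def]
  have hdq : ∀ j, |d j| ≤ q j := by
    intro j
    rw [hd_eq j, hq_eq j]
    rcases abs_cases (x j - y j) with ⟨h, _⟩ | ⟨h, _⟩ <;>
      [linarith [hy0 j]; linarith [hx0 j]]
  -- q in terms of H and μ
  have hq_H : ∀ j, q j = ∑ k, μ k * Complex.normSq (H k j) := by
    intro j
    have h2 : star U * (X + Y) * U = star H * Matrix.diagonal (fun k => (μ k : ℂ)) * H := by
      conv_lhs => rw [hMspec]
      rw [hH_def, star_mul, star_star]
      noncomm_ring
    have h3 := kf_diag_entry H μ j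
    rw [hq_def]
    simp only [h2, h3, Complex.ofReal_re]
  -- weights
  set c : Fin N → ℝ := fun j => ∑ i ∈ s, Complex.normSq (G j i) with hc_def
  set e : Fin N → ℝ := fun k => ∑ j, Complex.normSq (H k j) * c j with he_def
  have hc0 : ∀ j, 0 ≤ c j := fun j =>
    Finset.sum_nonneg fun i _ => Complex.normSq_nonneg _
  have hc1 : ∀ j, c j ≤ 1 := by
    intro j
    calc c j ≤ ∑ i, Complex.normSq (G j i) :=
          Finset.sum_le_sum_of_subset_of_nonneg (Finset.subset_univ s)
            (fun i _ _ => Complex.normSq_nonneg _)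
      _ = 1 := kf_row G hG2 j
  have hcs : ∑ j, c j = (n : ℝ) := by
    rw [hc_def]
    rw [Finset.sum_comm]
    have : ∀ i ∈ s, ∑ j, Complex.normSq (G j i) = 1 := fun i _ => kf_col G hG1 i
    rw [Finset.sum_congr rfl this, Finset.sum_const, hs]
    simp
  have he0 : ∀ k, 0 ≤ e k := fun k =>
    Finset.sum_nonneg fun j _ => mul_nonneg (Complex.normSq_nonneg _) (hc0 j)
  have he1 : ∀ k, e k ≤ 1 := by
    intro k
    calc e k ≤ ∑ j, Complex.normSq (H k j) * 1 :=
          Finset.sum_le_sum fun j _ =>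
            mul_le_mul_of_nonneg_left (hc1 j) (Complex.normSq_nonneg _)
      _ = ∑ j, Complex.normSq (H k j) := by simp
      _ = 1 := kf_row H hH2 k
  have hes : ∑ k, e k = (n : ℝ) := by
    rw [he_def]
    rw [Finset.sum_comm]
    have : ∀ j, ∑ k, Complex.normSq (H k j) * c j = c j := by
      intro j
      rw [← Finset.sum_mul, kf_col H hH1 j, one_mul]
    rw [Finset.sum_congr rfl fun j _ => this j, hcs]
  -- main chain
  have step1 : ∑ i ∈ s, singularValues (X - Y) i = ∑ j, |d j| * c j := by
    rw [Finset.sum_congr rfl fun i _ => hsv i, Finset.sum_comm]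
    exact Finset.sum_congr rfl fun j _ => by rw [hc_def, Finset.mul_sum]
  have step2 : ∑ j, |d j| * c j ≤ ∑ j, q j * c j :=
    Finset.sum_le_sum fun j _ => mul_le_mul_of_nonneg_right (hdq j) (hc0 j)
  have step3 : ∑ j, q j * c j = ∑ k, μ k * e k := by
    rw [Finset.sum_congr rfl fun j (_ : j ∈ Finset.univ) => by rw [hq_H j, Finset.sum_mul]]
    rw [Finset.sum_comm]
    refine Finset.sum_congr rfl fun k _ => ?_
    rw [he_def, Finset.mul_sum]
    exact Finset.sum_congr rfl fun j _ => by ring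
  obtain ⟨t, htcard, htle⟩ := kf_substochastic hn hn' μ e he0 he1 hes
  exact ⟨t, htcard, by rw [step1]; linarith⟩
end

section
/- In the setting of a coherent-state resolution of identity ∫ |z⟩⟨z| dz = (1/d_m)·1 on a probability space, for any operator T and any measurable set A ⊆ Z, (1/d_m) Tr(Op[1_A] T) ≤ sup over operators 0 ≤ S ≤ 1 with Tr S ≤ |A| d_m of (1/d_m) Tr(S T); consequently for every s ∈ [0,1), ∫_0^s (Hus[T])^* dt ≤ (1/d_m) Σ_{i=1}^{⌊s d_m⌋} λ_i(T) + ({s d_m}/d_m) λ_{⌊s d_m⌋+1}(T) for self-adjoint T, where ( )^* denotes the decreasing rearrangement and λ_i are eigenvalues in decreasing order. -/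
open MeasureTheory
open scoped BigOperators Matrix ComplexOrder

/-- The (signed) decreasing rearrangement of a real-valued function on a
probability space: f^*(t) = inf { a | μ{f > a} ≤ t }. -/
noncomputable def decRearr {Z : Type*} [MeasurableSpace Z] (μ : Measure Z)
    (f : Z → ℝ) (t : ℝ) : ℝ :=
  sInf {a : ℝ | (μ {x | a < f x}).toReal ≤ t}

lemma BL.psd_diag_nonneg {n : Type*} [Fintype n] [DecidableEq n] {A : Matrix n n ℂ}
    (hA : A.PosSemidef) (i : n) : 0 ≤ (A i i).re := by
  have h := hA.dotProduct_mulVec_nonneg (Pi.single i 1)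
  have hstar : star (Pi.single i 1 : n → ℂ) = Pi.single i 1 := by
    ext j; by_cases hj : j = i <;> simp [Pi.single_apply, hj]
  have : dotProduct (star (Pi.single i 1)) (A *ᵥ (Pi.single i 1 : n → ℂ)) = A i i := by
    rw [hstar, Matrix.mulVec_single, single_dotProduct]
    simp
  rw [this] at h
  exact (Complex.le_def.mp h).1

lemma BL.psd_trace_re_nonneg {n : Type*} [Fintype n] [DecidableEq n] {A : Matrix n n ℂ}
    (hA : A.PosSemidef) : 0 ≤ A.trace.re := by
  rw [Matrix.trace, Complex.re_sum]
  exact Finset.sum_nonneg fun i _ => BL.psd_diag_nonneg hA i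

section
open scoped MatrixOrder

lemma BL.trace_mul_re_nonneg {n : Type*} [Fintype n] [DecidableEq n] {A B : Matrix n n ℂ}
    (hA : A.PosSemidef) (hB : B.PosSemidef) : 0 ≤ (A * B).trace.re := by
  have h1 : A * B = CFC.sqrt A * (CFC.sqrt A * B) := by
    rw [← mul_assoc, CFC.sqrt_mul_sqrt_self A hA.nonneg]
  rw [h1, Matrix.trace_mul_comm]
  have : CFC.sqrt A * B * CFC.sqrt A = CFC.sqrt A * B * (CFC.sqrt A)ᴴ := by
    rw [(Matrix.nonneg_iff_posSemidef.mp (CFC.sqrt_nonneg A)).1.eq]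
  rw [this]
  exact BL.psd_trace_re_nonneg (hB.mul_mul_conjTranspose_same (CFC.sqrt A))

end

namespace BL
variable {n : Type*} [Fintype n] [DecidableEq n] {T : Matrix n n ℂ}

/-- conjugation of a real diagonal by the eigenvector unitary of `hT`. -/
noncomputable def Dg (hT : T.IsHermitian) (g : n → ℝ) : Matrix n n ℂ :=
  (hT.eigenvectorUnitary : Matrix n n ℂ) * Matrix.diagonal (fun i => (g i : ℂ)) *
    (star (hT.eigenvectorUnitary : Matrix n n ℂ))

lemma Dg_posSemidef (hT : T.IsHermitian) {g : n → ℝ} (hg : ∀ i, 0 ≤ g i) :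
    (Dg hT g).PosSemidef := by
  have hD : (Matrix.diagonal (fun i => ((g i : ℂ)))).PosSemidef :=
    Matrix.posSemidef_diagonal_iff.mpr fun i => by
      simpa using Complex.zero_le_real.mpr (hg i)
  simpa [Dg, Matrix.star_eq_conjTranspose] using
    hD.mul_mul_conjTranspose_same (hT.eigenvectorUnitary : Matrix n n ℂ)

lemma Dg_sub (hT : T.IsHermitian) (g h : n → ℝ) :
    Dg hT g - Dg hT h = Dg hT (g - h) := by
  simp only [Dg, ← Matrix.sub_mul, ← Matrix.mul_sub, Matrix.diagonal_sub]
  congr 2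
  ext i
  simp

lemma Dg_trace (hT : T.IsHermitian) (g : n → ℝ) :
    (Dg hT g).trace = ((∑ i, g i : ℝ) : ℂ) := by
  rw [Dg, Matrix.trace_mul_comm, ← mul_assoc, Unitary.coe_star_mul_self, one_mul,
    Matrix.trace_diagonal]
  push_cast
  rfl

lemma Dg_eigen (hT : T.IsHermitian) : Dg hT hT.eigenvalues = T := by
  rw [Dg]
  exact hT.spectral_theorem.symm

lemma Dg_const (hT : T.IsHermitian) (a : ℝ) : Dg hT (fun _ => a) = (a : ℂ) • 1 := by
  have : Matrix.diagonal (fun _ : n => (a : ℂ)) = (a : ℂ) • 1 := by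
    ext i j
    by_cases h : i = j <;> simp [Matrix.diagonal_apply, Matrix.one_apply, h]
  rw [Dg, this, Matrix.mul_smul, Matrix.smul_mul, mul_one,
    Matrix.mem_unitaryGroup_iff.mp (hT.eigenvectorUnitary).2]

end BL

namespace BL
variable {n : Type*} [Fintype n] [DecidableEq n] {T : Matrix n n ℂ}

lemma trace_mul_le_of_psd_le {A B P : Matrix n n ℂ} (hBA : (B - A).PosSemidef)
    (hP : P.PosSemidef) : (A * P).trace.re ≤ (B * P).trace.re := by
  have h := BL.trace_mul_re_nonneg hBA hP
  rw [Matrix.sub_mul, Matrix.trace_sub, Complex.sub_re] at h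
  linarith

lemma smul_one_mul_trace_re (a : ℝ) {P : Matrix n n ℂ} (hPtr : P.trace = 1) :
    ((((a : ℂ) • 1) * P).trace).re = a := by
  rw [Matrix.smul_mul, one_mul, Matrix.trace_smul, hPtr]
  simp

lemma husimi_le (hT : T.IsHermitian) {P : Matrix n n ℂ} (hP : P.PosSemidef)
    (hPtr : P.trace = 1) (a : ℝ) :
    (T * P).trace.re - a ≤ ((Dg hT (fun i => max (hT.eigenvalues i - a) 0)) * P).trace.re := by
  have hTa : T - (a : ℂ) • 1 = Dg hT (hT.eigenvalues - fun _ => a) := by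
    rw [← Dg_sub, Dg_eigen, Dg_const]
  have hpsd : (Dg hT (fun i => max (hT.eigenvalues i - a) 0) - (T - (a : ℂ) • 1)).PosSemidef := by
    rw [hTa, Dg_sub]
    exact Dg_posSemidef hT fun i => by simp [Pi.sub_apply, le_max_iff]
  have h := trace_mul_le_of_psd_le hpsd hP
  rw [Matrix.sub_mul, Matrix.trace_sub, Complex.sub_re, smul_one_mul_trace_re a hPtr] at h
  linarith

lemma husimi_upper (hT : T.IsHermitian) {P : Matrix n n ℂ} (hP : P.PosSemidef)
    (hPtr : P.trace = 1) {c : ℝ} (hc : ∀ i, hT.eigenvalues i ≤ c) :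
    (T * P).trace.re ≤ c := by
  have hpsd : ((c : ℂ) • 1 - T).PosSemidef := by
    have : (c : ℂ) • (1 : Matrix n n ℂ) - T = Dg hT ((fun _ => c) - hT.eigenvalues) := by
      rw [← Dg_sub, Dg_eigen, Dg_const]
    rw [this]
    exact Dg_posSemidef hT fun i => by simpa using hc i
  have h := trace_mul_le_of_psd_le hpsd hP
  rwa [smul_one_mul_trace_re c hPtr] at h

lemma husimi_lower (hT : T.IsHermitian) {P : Matrix n n ℂ} (hP : P.PosSemidef)
    (hPtr : P.trace = 1) {c : ℝ} (hc : ∀ i, c ≤ hT.eigenvalues i) :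
    c ≤ (T * P).trace.re := by
  have hpsd : (T - (c : ℂ) • 1).PosSemidef := by
    have : T - (c : ℂ) • (1 : Matrix n n ℂ) = Dg hT (hT.eigenvalues - fun _ => c) := by
      rw [← Dg_sub, Dg_eigen, Dg_const]
    rw [this]
    exact Dg_posSemidef hT fun i => by simpa using hc i
  have h := trace_mul_le_of_psd_le hpsd hP
  rwa [smul_one_mul_trace_re c hPtr] at h

end BL

namespace BL

lemma integral_trace {N : ℕ} {Z : Type*} [MeasurableSpace Z] (μ : Measure Z)
    (P : Z → Matrix (Fin N) (Fin N) ℂ)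
    (hint : ∀ i j, Integrable (fun z => P z i j) μ)
    (hres : ∀ i j, ∫ z, P z i j ∂μ = ((N : ℂ))⁻¹ * (1 : Matrix (Fin N) (Fin N) ℂ) i j)
    (B : Matrix (Fin N) (Fin N) ℂ) :
    Integrable (fun z => ((B * P z).trace).re) μ ∧
      ∫ z, ((B * P z).trace).re ∂μ = (N : ℝ)⁻¹ * B.trace.re := by
  have htr : ∀ z, (B * P z).trace = ∑ i, ∑ j, B i j * P z j i := by
    intro z; simp [Matrix.trace, Matrix.diag, Matrix.mul_apply]
  have hci : Integrable (fun z => (B * P z).trace) μ := by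
    simp only [htr]
    exact integrable_finset_sum _ fun i _ =>
      integrable_finset_sum _ fun j _ => (hint j i).const_mul _
  have hre : Integrable (fun z => ((B * P z).trace).re) μ := hci.re
  refine ⟨hre, ?_⟩
  have hint2 : ∫ z, (B * P z).trace ∂μ = (N : ℂ)⁻¹ * B.trace := by
    simp only [htr]
    rw [integral_finset_sum _ fun i _ =>
      integrable_finset_sum _ fun j _ => (hint j i).const_mul (B i j)]
    have : ∀ i : Fin N, ∫ z, ∑ j, B i j * P z j i ∂μ
        = ∑ j, B i j * ((N : ℂ)⁻¹ * (1 : Matrix (Fin N) (Fin N) ℂ) j i) := by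
      intro i
      rw [integral_finset_sum _ fun j _ => (hint j i).const_mul (B i j)]
      refine Finset.sum_congr rfl fun j _ => ?_
      rw [integral_const_mul, hres j i]
    simp only [this, Matrix.one_apply, mul_ite, mul_one, mul_zero]
    rw [Matrix.trace, Finset.mul_sum]
    refine Finset.sum_congr rfl fun i _ => ?_
    rw [Finset.sum_ite_eq' Finset.univ i (fun j => B i j * (N:ℂ)⁻¹)]
    simp [Matrix.diag, mul_comm]
  calc ∫ z, ((B * P z).trace).re ∂μ = ((N : ℂ)⁻¹ * B.trace).re := by
        have h := integral_re (𝕜 := ℂ) hci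
        simp only [RCLike.re_to_complex] at h
        rw [h, hint2]
    _ = (N : ℝ)⁻¹ * B.trace.re := by
        rw [show ((N:ℂ)⁻¹) = (((N:ℝ)⁻¹ : ℝ) : ℂ) by push_cast; ring, Complex.re_ofReal_mul]

end BL

namespace BL

lemma trace_mul_le_trace {n : Type*} [Fintype n] [DecidableEq n] {S B₀ T : Matrix n n ℂ}
    (hS1 : S.PosSemidef) (hS2 : ((1 : Matrix n n ℂ) - S).PosSemidef)
    (hBT : (B₀ - T).PosSemidef) (hB₀ : B₀.PosSemidef) :
    (S * T).trace.re ≤ B₀.trace.re := by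
  have h1 : (S * T).trace.re ≤ (S * B₀).trace.re := by
    rw [Matrix.trace_mul_comm S T, Matrix.trace_mul_comm S B₀]
    exact trace_mul_le_of_psd_le hBT hS1
  have h2 : (S * B₀).trace.re ≤ B₀.trace.re := by
    have h := trace_mul_re_nonneg hB₀ hS2
    rw [Matrix.mul_sub, mul_one, Matrix.trace_sub, Complex.sub_re,
      Matrix.trace_mul_comm B₀ S] at h
    linarith
  linarith

lemma quad_setIntegral {N : ℕ} {Z : Type*} [MeasurableSpace Z] (μ : Measure Z)
    (P : Z → Matrix (Fin N) (Fin N) ℂ)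
    (hint : ∀ i j, Integrable (fun z => P z i j) μ)
    (A : Set Z) (x : Fin N → ℂ) :
    star x ⬝ᵥ ((Matrix.of fun i j => (N : ℂ) * ∫ z in A, P z i j ∂μ) *ᵥ x)
      = (N : ℂ) * ∫ z in A, star x ⬝ᵥ (P z *ᵥ x) ∂μ := by
  have hqint : ∀ i j, Integrable (fun z => star (x i) * (P z i j * x j)) (μ.restrict A) :=
    fun i j => (((hint i j).restrict).mul_const (x j)).const_mul (star (x i))
  have hq : ∀ z, star x ⬝ᵥ (P z *ᵥ x) = ∑ i, ∑ j, star (x i) * (P z i j * x j) := by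
    intro z
    simp [dotProduct, Matrix.mulVec, Finset.mul_sum]
  simp only [hq]
  rw [integral_finset_sum _ fun i _ => integrable_finset_sum _ fun j _ => hqint i j]
  have : ∀ i : Fin N, ∫ z in A, ∑ j, star (x i) * (P z i j * x j) ∂μ
      = ∑ j, star (x i) * ((∫ z in A, P z i j ∂μ) * x j) := by
    intro i
    rw [integral_finset_sum _ fun j _ => hqint i j]
    exact Finset.sum_congr rfl fun j _ => by
      rw [integral_const_mul, integral_mul_const]
  simp only [this, dotProduct, Matrix.mulVec, Matrix.of_apply, Finset.mul_sum,
    Pi.star_apply]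
  refine Finset.sum_congr rfl fun i _ => Finset.sum_congr rfl fun j _ => by ring

end BL

/-- Berezin–Lieb inequality for the Husimi function in majorization form:
(1) (1/d_m)·Tr(Op[1_A]T) is bounded by the sup of (1/d_m)·Tr(ST) over 0 ≤ S ≤ 1
with Tr S ≤ |A|·d_m; (2) the partial integrals of the decreasing rearrangement of
Hus[T] are bounded by the correspondingly interpolated partial sums of the
decreasing eigenvalues of T. -/
theorem berezin_lieb_husimi (N : ℕ) (hN : 0 < N)
    {Z : Type*} [MeasurableSpace Z] (μ : Measure Z) [IsProbabilityMeasure μ]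
    (P : Z → Matrix (Fin N) (Fin N) ℂ)
    (hint : ∀ i j, Integrable (fun z => P z i j) μ)
    (hherm : ∀ z, (P z).IsHermitian)
    (hidem : ∀ z, P z * P z = P z)
    (hrank : ∀ z, (P z).trace = 1)
    (hres : ∀ i j, ∫ z, P z i j ∂μ = ((N : ℂ))⁻¹ * (1 : Matrix (Fin N) (Fin N) ℂ) i j)
    (T : Matrix (Fin N) (Fin N) ℂ) (hT : T.IsHermitian)
    (lam : ℕ → ℝ)
    (hsort : ∀ i j : ℕ, i ≤ j → j < N → lam j ≤ lam i)
    (henum : ∃ e : Fin N ≃ Fin N, ∀ i : Fin N, lam i = hT.eigenvalues (e i)) :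
    (∀ A : Set Z, MeasurableSet A →
      ((N : ℝ))⁻¹ *
          ((Matrix.of fun i j => (N : ℂ) * ∫ z in A, P z i j ∂μ) * T).trace.re
        ≤ sSup {r : ℝ | ∃ S : Matrix (Fin N) (Fin N) ℂ,
            S.PosSemidef ∧ ((1 : Matrix (Fin N) (Fin N) ℂ) - S).PosSemidef ∧
            S.trace.re ≤ (μ A).toReal * N ∧
            r = ((N : ℝ))⁻¹ * (S * T).trace.re})
    ∧
    (∀ s : ℝ, 0 ≤ s → s < 1 →
      (∫ t in (0:ℝ)..s, decRearr μ (fun z => ((T * P z).trace).re) t)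
        ≤ ((N : ℝ))⁻¹ * ∑ i ∈ Finset.range ⌊s * N⌋₊, lam i
            + ((s * N - ⌊s * N⌋₊) / N) * lam ⌊s * N⌋₊) := by

  have hPpsd : ∀ z, (P z).PosSemidef := fun z => by
    have h := Matrix.posSemidef_conjTranspose_mul_self (P z)
    rwa [(hherm z).eq, hidem z] at h
  -- the positive-part bound matrix for part-1 boundedness
  set B₀ : Matrix (Fin N) (Fin N) ℂ := BL.Dg hT (fun i => max (hT.eigenvalues i) 0) with hB₀def
  have hB₀psd : B₀.PosSemidef := BL.Dg_posSemidef hT fun i => le_max_right _ _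
  have hB₀T : (B₀ - T).PosSemidef := by
    have h : B₀ - T = BL.Dg hT ((fun i => max (hT.eigenvalues i) 0) - hT.eigenvalues) := by
      rw [hB₀def, ← BL.Dg_sub, BL.Dg_eigen]
    rw [h]
    exact BL.Dg_posSemidef hT fun i => by simp [Pi.sub_apply]
  have hbdd : BddAbove {r : ℝ | ∃ S : Matrix (Fin N) (Fin N) ℂ,
      S.PosSemidef ∧ ((1 : Matrix (Fin N) (Fin N) ℂ) - S).PosSemidef ∧
      True ∧ r = ((N : ℝ))⁻¹ * (S * T).trace.re} := by
    refine ⟨(N : ℝ)⁻¹ * B₀.trace.re, ?_⟩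
    rintro r ⟨S, hS1, hS2, -, rfl⟩
    exact mul_le_mul_of_nonneg_left (BL.trace_mul_le_trace hS1 hS2 hB₀T hB₀psd)
      (by positivity)
  constructor
  · intro A hA
    set S : Matrix (Fin N) (Fin N) ℂ :=
      Matrix.of fun i j => (N : ℂ) * ∫ z in A, P z i j ∂μ with hSdef
    -- quadratic form facts
    have hquad : ∀ x : Fin N → ℂ,
        star x ⬝ᵥ (S *ᵥ x) = (N : ℂ) * ∫ z in A, star x ⬝ᵥ (P z *ᵥ x) ∂μ :=
      fun x => BL.quad_setIntegral μ P hint A x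
    have hqnn : ∀ x : Fin N → ℂ, ∀ z, 0 ≤ star x ⬝ᵥ (P z *ᵥ x) := fun x z => (hPpsd z).dotProduct_mulVec_nonneg x
    have hqre : ∀ x : Fin N → ℂ, ∀ z,
        star x ⬝ᵥ (P z *ᵥ x) = (((star x ⬝ᵥ (P z *ᵥ x)).re : ℝ) : ℂ) := by
      intro x z
      have h := hqnn x z
      rw [Complex.le_def] at h
      exact Complex.ext rfl (by simpa using h.2.symm)
    have hqint : ∀ x : Fin N → ℂ, Integrable (fun z => star x ⬝ᵥ (P z *ᵥ x)) μ := by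
      intro x
      have : ∀ z, star x ⬝ᵥ (P z *ᵥ x) = ∑ i, ∑ j, star (x i) * (P z i j * x j) := by
        intro z; simp [dotProduct, Matrix.mulVec, Finset.mul_sum, Pi.star_apply]
      simp only [this]
      exact integrable_finset_sum _ fun i _ => integrable_finset_sum _ fun j _ =>
        (((hint i j).mul_const (x j)).const_mul (star (x i)))
    -- the restricted quadratic integral as a real number
    have hqsetcast : ∀ (x : Fin N → ℂ) (B : Set Z),
        ∫ z in B, star x ⬝ᵥ (P z *ᵥ x) ∂μ
          = ((∫ z in B, (star x ⬝ᵥ (P z *ᵥ x)).re ∂μ : ℝ) : ℂ) := by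
      intro x B
      calc ∫ z in B, star x ⬝ᵥ (P z *ᵥ x) ∂μ
          = ∫ z in B, (((star x ⬝ᵥ (P z *ᵥ x)).re : ℝ) : ℂ) ∂μ := by
            exact integral_congr_ae (Filter.Eventually.of_forall fun z => hqre x z)
        _ = ((∫ z in B, (star x ⬝ᵥ (P z *ᵥ x)).re ∂μ : ℝ) : ℂ) := integral_ofReal
    have hS1 : S.PosSemidef := by
      refine Matrix.PosSemidef.of_dotProduct_mulVec_nonneg ?_ ?_
      · ext i j
        have hconj : (starRingEnd ℂ) (∫ z in A, P z j i ∂μ) = ∫ z in A, P z i j ∂μ := by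
          rw [← integral_conj]
          refine integral_congr_ae (Filter.Eventually.of_forall fun z => ?_)
          have := congrFun (congrFun (hherm z).eq i) j
          simpa [Matrix.conjTranspose_apply] using this
        simp only [Matrix.conjTranspose_apply, hSdef, Matrix.of_apply, star_mul']
        rw [show (star ((N : ℂ))) = ((N : ℂ)) by simp,
          show (star (∫ z in A, P z j i ∂μ)) = (starRingEnd ℂ) (∫ z in A, P z j i ∂μ) from rfl,
          hconj]
      · intro x
        rw [hquad x, hqsetcast x A]
        have hnn : 0 ≤ ∫ z in A, (star x ⬝ᵥ (P z *ᵥ x)).re ∂μ :=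
          integral_nonneg fun z => by
            have h := hqnn x z
            rw [Complex.le_def] at h
            simpa using h.1
        rw [show ((N : ℂ)) = (((N : ℝ)) : ℂ) by push_cast; ring, ← Complex.ofReal_mul]
        exact Complex.zero_le_real.mpr (by positivity)
    have hS2 : ((1 : Matrix (Fin N) (Fin N) ℂ) - S).PosSemidef := by
      refine Matrix.PosSemidef.of_dotProduct_mulVec_nonneg ?_ ?_
      · exact Matrix.isHermitian_one.sub hS1.1
      · intro x
        rw [Matrix.sub_mulVec, dotProduct_sub, Matrix.one_mulVec, hquad x]
        have hNC : ((N : ℂ)) ≠ 0 := by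
          exact_mod_cast Nat.cast_ne_zero.mpr hN.ne'
        have hfull : star x ⬝ᵥ x = (N : ℂ) * ∫ z, star x ⬝ᵥ (P z *ᵥ x) ∂μ := by
          have h := BL.quad_setIntegral μ P hint Set.univ x
          rw [Measure.restrict_univ] at h
          have hM : (Matrix.of fun i j => (N : ℂ) * ∫ z, P z i j ∂μ)
              = (1 : Matrix (Fin N) (Fin N) ℂ) := by
            ext i j
            rw [Matrix.of_apply, hres i j, ← mul_assoc, mul_inv_cancel₀ hNC, one_mul]
          rw [hM, Matrix.one_mulVec] at h
          exact h
        have hAcast := hqsetcast x A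
        have hUcast := hqsetcast x Set.univ
        rw [Measure.restrict_univ] at hUcast
        have hle : (∫ z in A, (star x ⬝ᵥ (P z *ᵥ x)).re ∂μ)
            ≤ ∫ z, (star x ⬝ᵥ (P z *ᵥ x)).re ∂μ := by
          refine setIntegral_le_integral (hqint x).re
            (Filter.Eventually.of_forall fun z => ?_)
          have h := hqnn x z
          rw [Complex.le_def] at h
          simpa using h.1
        rw [hfull, hUcast, hAcast, show ((N : ℂ)) = (((N : ℝ)) : ℂ) by push_cast; ring,
          ← Complex.ofReal_mul, ← Complex.ofReal_mul, ← Complex.ofReal_sub]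
        refine Complex.zero_le_real.mpr (sub_nonneg.mpr ?_)
        exact mul_le_mul_of_nonneg_left hle (by positivity)
    refine le_csSup ?_ ⟨S, hS1, hS2, ?_, rfl⟩
    · -- bounded above: weaken to the trace-free description
      obtain ⟨C, hC⟩ := hbdd
      refine ⟨C, ?_⟩
      rintro r ⟨S', h1, h2, h3, rfl⟩
      exact hC ⟨S', h1, h2, trivial, rfl⟩
    · -- trace bound
      have htrS : S.trace = (N : ℂ) * (((μ A).toReal : ℝ) : ℂ) := by
        have h1 : S.trace = (N : ℂ) * ∫ z in A, (P z).trace ∂μ := by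
          rw [Matrix.trace, hSdef]
          have : ∀ z, (P z).trace = ∑ i, P z i i := fun z => rfl
          calc ∑ i, (Matrix.of fun i j => (N : ℂ) * ∫ z in A, P z i j ∂μ).diag i
              = ∑ i, (N : ℂ) * ∫ z in A, P z i i ∂μ := rfl
            _ = (N : ℂ) * ∑ i, ∫ z in A, P z i i ∂μ := by rw [Finset.mul_sum]
            _ = (N : ℂ) * ∫ z in A, ∑ i, P z i i ∂μ := by
                rw [integral_finset_sum _ fun i _ => (hint i i).restrict]
            _ = (N : ℂ) * ∫ z in A, (P z).trace ∂μ := rfl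
        rw [h1]
        congr 1
        calc ∫ z in A, (P z).trace ∂μ = ∫ z in A, (1 : ℂ) ∂μ := by
              exact integral_congr_ae (Filter.Eventually.of_forall fun z => hrank z)
          _ = (((μ A).toReal : ℝ) : ℂ) := by
              rw [integral_const]
              simp [Measure.restrict_apply_univ, Measure.real]
      rw [htrS, show ((N : ℂ)) = (((N : ℝ)) : ℂ) by push_cast; ring, ← Complex.ofReal_mul]
      rw [Complex.ofReal_re]
      exact le_of_eq (mul_comm _ _)
  · intro s hs0 hs1
    obtain ⟨e, he⟩ := henum
    set f : Z → ℝ := fun z => ((T * P z).trace).re with hfdef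
    set k : ℕ := ⌊s * (N : ℝ)⌋₊ with hkdef
    have hNR : (0:ℝ) < N := by exact_mod_cast hN
    have hkN : k < N := by
      rw [hkdef, Nat.floor_lt (by positivity)]
      calc s * N < 1 * N := by exact mul_lt_mul_of_pos_right hs1 hNR
        _ = N := one_mul _
    set a : ℝ := lam k with hadef
    have heig : ∀ j : Fin N, hT.eigenvalues j = lam ((e.symm j : Fin N) : ℕ) := by
      intro j; rw [he (e.symm j), Equiv.apply_symm_apply]
    have hub : ∀ z, f z ≤ lam 0 :=
      fun z => BL.husimi_upper hT (hPpsd z) (hrank z) (fun j => by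
        rw [heig j]; exact hsort 0 _ (Nat.zero_le _) (Fin.is_lt _))
    have hlb : ∀ z, lam (N - 1) ≤ f z :=
      fun z => BL.husimi_lower hT (hPpsd z) (hrank z) (fun j => by
        rw [heig j]
        exact hsort _ (N-1) (Nat.le_sub_one_of_lt (Fin.is_lt _)) (by omega))
    obtain ⟨hfint, -⟩ := BL.integral_trace μ P hint hres T
    set g : ℝ → ℝ := decRearr μ f with hgdef
    have hgSS : ∀ t, g t = sInf {b : ℝ | (μ {z | b < f z}).toReal ≤ t} := fun t => rfl
    have hSne : ∀ t : ℝ, 0 ≤ t → {b : ℝ | (μ {z | b < f z}).toReal ≤ t}.Nonempty := by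
      intro t ht
      refine ⟨lam 0, ?_⟩
      have hempty : {z | lam 0 < f z} = ∅ := by
        ext z; simp only [Set.mem_setOf_eq, Set.mem_empty_iff_false, iff_false, not_lt]
        exact hub z
      simp [hempty, ht]
    have hSbdd : ∀ t : ℝ, t < 1 →
        lam (N-1) ∈ lowerBounds {b : ℝ | (μ {z | b < f z}).toReal ≤ t} := by
      intro t ht b hb
      by_contra hcon
      push_neg at hcon
      have huniv : {z | b < f z} = Set.univ := by
        ext z; simp only [Set.mem_setOf_eq, Set.mem_univ, iff_true]
        exact lt_of_lt_of_le hcon (hlb z)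
      rw [Set.mem_setOf_eq, huniv] at hb
      simp only [measure_univ, ENNReal.toReal_one] at hb
      linarith
    have hg_anti : AntitoneOn g (Set.Icc 0 s) := by
      intro t1 h1 t2 h2 h12
      rw [hgSS, hgSS]
      exact csInf_le_csInf ⟨lam (N-1), hSbdd t2 (lt_of_le_of_lt h2.2 hs1)⟩
        (hSne t1 h1.1) (fun b hb => le_trans hb h12)
    have hkey : ∀ t : ℝ, 0 ≤ t → t < 1 → ∀ c : ℝ, c < g t →
        t < (μ {z | c < f z}).toReal := by
      intro t ht0 ht1 c hc
      by_contra hcon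
      push_neg at hcon
      have : g t ≤ c := by
        rw [hgSS]
        exact csInf_le ⟨lam (N-1), hSbdd t ht1⟩ hcon
      linarith
    have hgint : IntegrableOn g (Set.Ioc 0 s) := by
      have h : AntitoneOn g (Set.uIcc 0 s) := by
        rw [Set.uIcc_of_le hs0]; exact hg_anti
      exact h.intervalIntegrable.1
    -- matrix side bound
    set Bm : Matrix (Fin N) (Fin N) ℂ := BL.Dg hT (fun i => max (hT.eigenvalues i - a) 0)
      with hBmdef
    obtain ⟨hBint, hBval⟩ := BL.integral_trace μ P hint hres Bm
    have hpt : ∀ z, max (f z - a) 0 ≤ ((Bm * P z).trace).re := by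
      intro z
      refine max_le ?_ ?_
      · have h := BL.husimi_le hT (hPpsd z) (hrank z) a
        exact h
      · exact BL.trace_mul_re_nonneg
          (BL.Dg_posSemidef hT fun i => le_max_right _ _) (hPpsd z)
    have hfmaxint : Integrable (fun z => max (f z - a) 0) μ :=
      (hfint.sub (integrable_const a)).pos_part
    have hI_le : ∫ z, max (f z - a) 0 ∂μ ≤ (N:ℝ)⁻¹ * Bm.trace.re := by
      rw [← hBval]
      exact integral_mono hfmaxint hBint hpt
    have hBtr : Bm.trace.re = ∑ i ∈ Finset.range k, (lam i - a) := by
      rw [hBmdef, BL.Dg_trace, Complex.ofReal_re]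
      have h1 : ∑ i : Fin N, max (hT.eigenvalues i - a) 0
          = ∑ i : Fin N, max (lam i - a) 0 := by
        rw [← Equiv.sum_comp e (fun j => max (hT.eigenvalues j - a) 0)]
        exact Finset.sum_congr rfl fun i _ => by rw [← he i]
      rw [h1, Fin.sum_univ_eq_sum_range (fun i => max (lam i - a) 0) N]
      have hsub : Finset.range k ⊆ Finset.range N := Finset.range_subset_range.mpr hkN.le
      have hz : ∀ i ∈ Finset.range N, i ∉ Finset.range k → max (lam i - a) 0 = 0 := by
        intro i hiN hik
        have h1 : k ≤ i := by
          by_contra h2; exact hik (Finset.mem_range.mpr (not_le.mp h2))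
        exact max_eq_right (sub_nonpos.mpr (hsort k i h1 (Finset.mem_range.mp hiN)))
      rw [← Finset.sum_subset hsub hz]
      exact Finset.sum_congr rfl fun i hi => max_eq_left
        (sub_nonneg.mpr (hsort i k (Finset.mem_range.mp hi).le hkN))
    -- layer-cake comparison
    have hmax_le_I : ∫ t in Set.Ioc 0 s, max (g t - a) 0
        ≤ ∫ z, max (f z - a) 0 ∂μ := by
      set ν := volume.restrict (Set.Ioc (0:ℝ) s) with hνdef
      have hGint : Integrable (fun t => max (g t - a) 0) ν := by
        refine Integrable.pos_part (hgint.sub ?_)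
        refine (integrableOn_const_iff (C := a)).mpr (Or.inr ?_)
        rw [Real.volume_Ioc]; exact ENNReal.ofReal_lt_top
      have hGnn : (0 : ℝ → ℝ) ≤ᵐ[ν] fun t => max (g t - a) 0 :=
        Filter.Eventually.of_forall fun t => le_max_right _ _
      have hfnn : (0 : Z → ℝ) ≤ᵐ[μ] fun z => max (f z - a) 0 :=
        Filter.Eventually.of_forall fun z => le_max_right _ _
      have h1 : ENNReal.ofReal (∫ t, max (g t - a) 0 ∂ν)
          = ∫⁻ t, ENNReal.ofReal (max (g t - a) 0) ∂ν :=
        ofReal_integral_eq_lintegral_ofReal hGint hGnn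
      have h2 : ∫⁻ t, ENNReal.ofReal (max (g t - a) 0) ∂ν
          = ∫⁻ u in Set.Ioi (0:ℝ), ν {t | u < max (g t - a) 0} :=
        lintegral_eq_lintegral_meas_lt ν hGnn hGint.aemeasurable
      have h3 : ∀ u : ℝ, 0 < u →
          ν {t | u < max (g t - a) 0} ≤ μ {z | u < max (f z - a) 0} := by
        intro u hu
        have hsub1 : {t | u < max (g t - a) 0}
            ⊆ ({t | u < max (g t - a) 0} ∩ Set.Ioc 0 s) ∪ (Set.Ioc 0 s)ᶜ := by
          intro t ht
          by_cases h : t ∈ Set.Ioc 0 s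
          · exact Or.inl ⟨ht, h⟩
          · exact Or.inr h
        have hcompl : ν ((Set.Ioc (0:ℝ) s)ᶜ) = 0 := by
          rw [hνdef, Measure.restrict_apply measurableSet_Ioc.compl]
          simp
        calc ν {t | u < max (g t - a) 0}
            ≤ ν ({t | u < max (g t - a) 0} ∩ Set.Ioc 0 s) + ν ((Set.Ioc (0:ℝ) s)ᶜ) :=
              le_trans (measure_mono hsub1) (measure_union_le _ _)
          _ = ν ({t | u < max (g t - a) 0} ∩ Set.Ioc 0 s) := by rw [hcompl, add_zero]
          _ ≤ volume ({t | u < max (g t - a) 0} ∩ Set.Ioc 0 s) :=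
              Measure.restrict_le_self _
          _ ≤ volume (Set.Ico 0 ((μ {z | (u + a) < f z}).toReal)) := by
              apply measure_mono
              rintro t ⟨ht1, ht2⟩
              have hga : u < g t - a := by
                rcases lt_max_iff.mp (Set.mem_setOf_eq ▸ ht1) with h | h
                · exact h
                · linarith
              have h4 := hkey t ht2.1.le (lt_of_le_of_lt ht2.2 hs1) (u + a)
                (lt_sub_iff_add_lt.mp hga)
              exact ⟨ht2.1.le, h4⟩
          _ ≤ μ {z | (u + a) < f z} := by
              rw [Real.volume_Ico, sub_zero]
              exact ENNReal.ofReal_toReal_le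
          _ = μ {z | u < max (f z - a) 0} := by
              congr 1
              ext z
              simp only [Set.mem_setOf_eq]
              constructor
              · intro h; exact lt_max_iff.mpr (Or.inl (lt_sub_iff_add_lt.mpr h))
              · intro h
                rcases lt_max_iff.mp h with h' | h'
                · exact lt_sub_iff_add_lt.mp h'
                · linarith
      have h4 : (∫⁻ u in Set.Ioi (0:ℝ), ν {t | u < max (g t - a) 0})
          ≤ ∫⁻ u in Set.Ioi (0:ℝ), μ {z | u < max (f z - a) 0} := by
        refine lintegral_mono_ae ?_
        filter_upwards [ae_restrict_mem measurableSet_Ioi] with u hu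
        exact h3 u hu
      have h5 : (∫⁻ u in Set.Ioi (0:ℝ), μ {z | u < max (f z - a) 0})
          = ENNReal.ofReal (∫ z, max (f z - a) 0 ∂μ) := by
        rw [← lintegral_eq_lintegral_meas_lt μ hfnn hfmaxint.aemeasurable,
          ← ofReal_integral_eq_lintegral_ofReal hfmaxint hfnn]
      have h6 : ENNReal.ofReal (∫ t, max (g t - a) 0 ∂ν)
          ≤ ENNReal.ofReal (∫ z, max (f z - a) 0 ∂μ) := by
        rw [h1, h2, ← h5]; exact h4
      exact (ENNReal.ofReal_le_ofReal_iff
        (integral_nonneg fun z => le_max_right _ _)).mp h6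
    -- assemble
    have hconstint : IntegrableOn (fun _ : ℝ => a) (Set.Ioc 0 s) := by
      refine (integrableOn_const_iff (C := a)).mpr (Or.inr ?_)
      rw [Real.volume_Ioc]; exact ENNReal.ofReal_lt_top
    have hposint : IntegrableOn (fun t => max (g t - a) 0) (Set.Ioc 0 s) :=
      Integrable.pos_part (hgint.sub hconstint)
    have hmono1 : ∫ t in Set.Ioc 0 s, g t
        ≤ ∫ t in Set.Ioc 0 s, (a + max (g t - a) 0) := by
      refine integral_mono hgint (hconstint.add hposint) ?_
      intro t
      have := le_max_left (g t - a) 0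
      simp only [Pi.add_apply]
      linarith
    have hsplit : ∫ t in Set.Ioc 0 s, (a + max (g t - a) 0)
        = s * a + ∫ t in Set.Ioc 0 s, max (g t - a) 0 := by
      rw [integral_add hconstint hposint]
      congr 1
      rw [setIntegral_const, Real.volume_real_Ioc_of_le hs0, sub_zero,
        smul_eq_mul]
    have hchain : ∫ t in (0:ℝ)..s, g t ≤ s * a + (N:ℝ)⁻¹ * ∑ i ∈ Finset.range k, (lam i - a) := by
      rw [intervalIntegral.integral_of_le hs0]
      calc ∫ t in Set.Ioc 0 s, g t ≤ s * a + ∫ t in Set.Ioc 0 s, max (g t - a) 0 := by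
            rw [← hsplit]; exact hmono1
        _ ≤ s * a + ∫ z, max (f z - a) 0 ∂μ := by linarith [hmax_le_I]
        _ ≤ s * a + (N:ℝ)⁻¹ * ∑ i ∈ Finset.range k, (lam i - a) := by
            rw [← hBtr]; linarith [hI_le]
    refine le_trans hchain (le_of_eq ?_)
    have hsum : ∑ i ∈ Finset.range k, (lam i - a)
        = (∑ i ∈ Finset.range k, lam i) - k * a := by
      rw [Finset.sum_sub_distrib, Finset.sum_const, Finset.card_range, nsmul_eq_mul]
    rw [hsum]
    field_simp
    ring
end

section
/- In the coherent-state setting with Op[f] = d_m ∫ f(z)|z⟩⟨z| dz on a probability space with ∫|z⟩⟨z| dz = 1/d_m, for every real-valued f ∈ L¹ and every s ∈ [0,1): (1/d_m) Σ_{i=1}^{⌊s d_m⌋} λ_i(Op[f]) + ({s d_m}/d_m) λ_{⌊s d_m⌋+1}(Op[f]) ≤ ∫_0^s f^* dt, with equality at s = 1. (Majorization Λ(Op[f]) ≺ f.) -/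
open MeasureTheory
open scoped BigOperators Matrix ComplexOrder

open Set Filter Topology
set_option maxHeartbeats 1000000


namespace BLaux

variable {Z : Type*} [MeasurableSpace Z] {μ : Measure Z} [IsProbabilityMeasure μ]
variable {f : Z → ℝ}

/-- distribution function -/
noncomputable def dF (μ : Measure Z) (f : Z → ℝ) (a : ℝ) : ℝ := (μ {x | a < f x}).toReal

lemma dF_nonneg (a : ℝ) : 0 ≤ dF μ f a := ENNReal.toReal_nonneg

lemma dF_le_one (a : ℝ) : dF μ f a ≤ 1 := by
  have h : μ {x | a < f x} ≤ 1 := prob_le_one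
  exact ENNReal.toReal_le_of_le_ofReal zero_le_one (by simpa using h)

lemma dF_anti : Antitone (dF μ f) := by
  intro a b hab
  have : {x | b < f x} ⊆ {x | a < f x} := fun x hx => lt_of_le_of_lt hab hx
  exact ENNReal.toReal_mono (measure_ne_top μ _) (measure_mono this)

lemma ofReal_dF (a : ℝ) : ENNReal.ofReal (dF μ f a) = μ {x | a < f x} :=
  ENNReal.ofReal_toReal (measure_ne_top μ _)

lemma exists_dF_le (hfm : Measurable f) {t : ℝ} (ht : 0 < t) : ∃ a, dF μ f a ≤ t := by
  have hmono : Antitone (fun n : ℕ => {x | (n : ℝ) < f x}) := by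
    intro n m hnm x hx
    exact lt_of_le_of_lt ((Nat.cast_le (α := ℝ)).mpr hnm) hx
  have hint : (⋂ n : ℕ, {x | (n : ℝ) < f x}) = ∅ := by
    ext x
    simp only [mem_iInter, mem_setOf_eq, mem_empty_iff_false, iff_false, not_forall, not_lt]
    obtain ⟨n, hn⟩ := exists_nat_ge (f x)
    exact ⟨n, hn⟩
  have htend := tendsto_measure_iInter_atTop
    (μ := μ) (s := fun n : ℕ => {x | (n : ℝ) < f x})
    (fun n => (hfm measurableSet_Ioi).nullMeasurableSet) hmono ⟨0, measure_ne_top μ _⟩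
  rw [hint] at htend
  simp only [measure_empty] at htend
  have := (ENNReal.tendsto_toReal (by simp)).comp htend
  simp only [ENNReal.toReal_zero] at this
  obtain ⟨n, hn⟩ := (this.eventually (eventually_le_nhds ht)).exists
  exact ⟨n, hn⟩

lemma exists_lt_dF (hfm : Measurable f) {t : ℝ} (ht : t < 1) : ∃ a, t < dF μ f a := by
  have hmono : Monotone (fun n : ℕ => {x | (-(n : ℝ)) < f x}) := by
    intro n m hnm x hx
    exact lt_of_le_of_lt (neg_le_neg ((Nat.cast_le (α := ℝ)).mpr hnm)) hx
  have huni : (⋃ n : ℕ, {x | (-(n : ℝ)) < f x}) = univ := by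
    ext x
    simp only [mem_iUnion, mem_setOf_eq, mem_univ, iff_true]
    obtain ⟨n, hn⟩ := exists_nat_ge (-(f x))
    exact ⟨n + 1, by push_cast; linarith⟩
  have htend := tendsto_measure_iUnion_atTop (μ := μ)
    (s := fun n : ℕ => {x | (-(n : ℝ)) < f x}) hmono
  rw [huni, measure_univ] at htend
  have := (ENNReal.tendsto_toReal (by simp)).comp htend
  simp only [ENNReal.toReal_one] at this
  obtain ⟨n, hn⟩ := (this.eventually (eventually_gt_nhds ht)).exists
  exact ⟨-(n : ℝ), hn⟩

lemma S_nonempty (hfm : Measurable f) {t : ℝ} (ht : 0 < t) :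
    {a : ℝ | (μ {x | a < f x}).toReal ≤ t}.Nonempty := exists_dF_le hfm ht

lemma S_bddBelow (hfm : Measurable f) {t : ℝ} (ht : t < 1) :
    BddBelow {a : ℝ | (μ {x | a < f x}).toReal ≤ t} := by
  obtain ⟨a0, ha0⟩ := exists_lt_dF (μ := μ) hfm ht
  refine ⟨a0, fun b hb => ?_⟩
  by_contra hba
  push_neg at hba
  exact absurd (le_trans (dF_anti hba.le) hb) (not_le.mpr ha0)

lemma lt_decRearr_iff (hfm : Measurable f) {t : ℝ} (ht : 0 < t) (ht1 : t < 1) (a : ℝ) :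
    a < decRearr μ f t ↔ t < dF μ f a := by
  constructor
  · intro h
    by_contra hc
    push_neg at hc
    exact absurd (csInf_le (S_bddBelow hfm ht1) (by exact hc : a ∈ _)) (not_le.mpr h)
  · intro h
    have hne := S_nonempty (μ := μ) hfm ht
    have hlb : a ≤ decRearr μ f t := by
      apply le_csInf hne
      intro b hb
      by_contra hba
      push_neg at hba
      have : dF μ f a ≤ t := le_trans (dF_anti hba.le) hb
      exact absurd h (not_lt.mpr this)
    rcases lt_or_eq_of_le hlb with h' | h'
    · exact h'
    exfalso
    -- decRearr μ f t = a ; derive dF a ≤ t, contradiction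
    have key : ∀ n : ℕ, dF μ f (a + 1 / (n + 1)) ≤ t := by
      intro n
      have hlt : decRearr μ f t < a + 1 / (n + 1) := by
        rw [← h']
        have : (0:ℝ) < 1 / (n + 1) := by positivity
        linarith
      obtain ⟨b, hb, hba⟩ := exists_lt_of_csInf_lt hne hlt
      exact le_trans (dF_anti hba.le) hb
    have huni : {x | a < f x} = ⋃ n : ℕ, {x | a + 1 / ((n:ℝ) + 1) < f x} := by
      ext x
      simp only [mem_setOf_eq, mem_iUnion]
      constructor
      · intro hx
        obtain ⟨n, hn⟩ := exists_nat_one_div_lt (sub_pos.mpr hx)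
        exact ⟨n, by push_cast at hn ⊢; linarith⟩
      · rintro ⟨n, hn⟩
        have : (0:ℝ) < 1 / ((n:ℝ) + 1) := by positivity
        linarith
    have hmono : Monotone (fun n : ℕ => {x | a + 1 / ((n:ℝ) + 1) < f x}) := by
      intro n m hnm x hx
      have h1 : (1:ℝ) / ((m:ℝ) + 1) ≤ 1 / ((n:ℝ) + 1) := by
        apply one_div_le_one_div_of_le (by positivity)
        have := (Nat.cast_le (α := ℝ)).mpr hnm
        linarith
      simp only [mem_setOf_eq] at hx ⊢
      exact lt_of_le_of_lt (by linarith) hx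
    have htend := tendsto_measure_iUnion_atTop (μ := μ)
      (s := fun n : ℕ => {x | a + 1 / ((n:ℝ) + 1) < f x}) hmono
    rw [← huni] at htend
    have hle : μ {x | a < f x} ≤ ENNReal.ofReal t := by
      apply le_of_tendsto htend
      filter_upwards with n
      show μ {x | a + 1 / ((n:ℝ) + 1) < f x} ≤ ENNReal.ofReal t
      rw [← ofReal_dF (μ := μ) (f := f) (a + 1 / ((n:ℝ) + 1))]
      exact ENNReal.ofReal_le_ofReal (key n)
    have : dF μ f a ≤ t := by
      rw [dF]
      exact ENNReal.toReal_le_of_le_ofReal ht.le hle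
    exact absurd h (not_lt.mpr this)

lemma decRearr_antitoneOn (hfm : Measurable f) :
    AntitoneOn (decRearr μ f) (Ioo (0:ℝ) 1) := by
  intro t ht t' ht' htt'
  exact csInf_le_csInf (S_bddBelow hfm ht'.2)
    (S_nonempty hfm ht.1)
    (fun a ha => le_trans ha htt')

lemma decRearr_eq_zero_of_neg {t : ℝ} (ht : t < 0) : decRearr μ f t = 0 := by
  have : {a : ℝ | (μ {x | a < f x}).toReal ≤ t} = ∅ := by
    ext a
    simp only [mem_setOf_eq, mem_empty_iff_false, iff_false, not_le]
    exact lt_of_lt_of_le ht ENNReal.toReal_nonneg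
  rw [decRearr, this, Real.sInf_empty]

lemma decRearr_eq_zero_of_one_le {t : ℝ} (ht : 1 ≤ t) : decRearr μ f t = 0 := by
  have : {a : ℝ | (μ {x | a < f x}).toReal ≤ t} = univ := by
    ext a
    simp only [mem_setOf_eq, mem_univ, iff_true]
    exact le_trans (dF_le_one (μ := μ) (f := f) a) ht
  rw [decRearr, this]
  exact Real.sInf_of_not_bddBelow (by simpa using not_bddBelow_univ (α := ℝ)) -- maybe wrong name


lemma decRearr_measurable (hfm : Measurable f) : Measurable (decRearr μ f) := by
  apply measurable_of_Ioi
  intro a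
  have hset : decRearr μ f ⁻¹' (Ioi a) =
      (Ioo (0:ℝ) 1 ∩ Iio (dF μ f a)) ∪ ({(0:ℝ)} ∩ decRearr μ f ⁻¹' (Ioi a)) ∪
      {t : ℝ | (t < 0 ∨ 1 ≤ t) ∧ a < 0} := by
    ext t
    simp only [mem_preimage, mem_Ioi, mem_union, mem_inter_iff, mem_Ioo, mem_Iio,
      mem_singleton_iff, mem_setOf_eq]
    constructor
    · intro hGa
      rcases lt_trichotomy t 0 with ht | rfl | ht
      · right
        rw [decRearr_eq_zero_of_neg (μ := μ) (f := f) ht] at hGa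
        exact ⟨Or.inl ht, hGa⟩
      · left; right; exact ⟨rfl, hGa⟩
      · by_cases ht1 : t < 1
        · left; left; exact ⟨⟨ht, ht1⟩, (lt_decRearr_iff hfm ht ht1 a).mp hGa⟩
        · right
          rw [decRearr_eq_zero_of_one_le (μ := μ) (f := f) (not_lt.mp ht1)] at hGa
          exact ⟨Or.inr (not_lt.mp ht1), hGa⟩
    · rintro (((⟨⟨ht0, ht1⟩, htf⟩) | (⟨rfl, h⟩)) | ⟨ht, ha⟩)
      · exact (lt_decRearr_iff hfm ht0 ht1 a).mpr htf
      · exact h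
      · rcases ht with ht | ht
        · rw [decRearr_eq_zero_of_neg (μ := μ) (f := f) ht]; exact ha
        · rw [decRearr_eq_zero_of_one_le (μ := μ) (f := f) ht]; exact ha
  rw [hset]
  refine MeasurableSet.union (MeasurableSet.union ?_ ?_) ?_
  · exact measurableSet_Ioo.inter measurableSet_Iio
  · exact Set.Countable.measurableSet ((countable_singleton (0:ℝ)).mono inter_subset_left)
  · by_cases ha : a < 0
    · simp only [ha, and_true]
      exact measurableSet_Iio.union measurableSet_Ici
    · simp only [ha, and_false, setOf_false]
      exact MeasurableSet.empty

lemma map_decRearr (hfm : Measurable f) :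
    (volume.restrict (Ioo (0:ℝ) 1)).map (decRearr μ f) = μ.map f := by
  have hprob : IsProbabilityMeasure (volume.restrict (Ioo (0:ℝ) 1)) :=
    ⟨by simp [Real.volume_Ioo]⟩
  have hGm := decRearr_measurable (μ := μ) (f := f) hfm
  have h1 : IsProbabilityMeasure ((volume.restrict (Ioo (0:ℝ) 1)).map (decRearr μ f)) :=
    Measure.isProbabilityMeasure_map hGm.aemeasurable
  have h2 : IsProbabilityMeasure (μ.map f) := Measure.isProbabilityMeasure_map hfm.aemeasurable
  have key : ∀ a : ℝ, ((volume.restrict (Ioo (0:ℝ) 1)).map (decRearr μ f)) (Ioi a)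
      = (μ.map f) (Ioi a) := by
    intro a
    rw [Measure.map_apply hGm measurableSet_Ioi, Measure.map_apply hfm measurableSet_Ioi,
      Measure.restrict_apply (hGm measurableSet_Ioi)]
    have hset : decRearr μ f ⁻¹' (Ioi a) ∩ Ioo 0 1 = Ioo 0 (dF μ f a) := by
      ext t
      simp only [mem_inter_iff, mem_preimage, mem_Ioi, mem_Ioo]
      constructor
      · rintro ⟨hGa, ht0, ht1⟩
        exact ⟨ht0, (lt_decRearr_iff hfm ht0 ht1 a).mp hGa⟩
      · rintro ⟨ht0, htf⟩
        have ht1 : t < 1 := lt_of_lt_of_le htf (dF_le_one a)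
        exact ⟨(lt_decRearr_iff hfm ht0 ht1 a).mpr htf, ht0, ht1⟩
    have hpre : f ⁻¹' (Ioi a) = {x | a < f x} := rfl
    rw [hset, hpre, Real.volume_Ioo, ← ofReal_dF (μ := μ) (f := f) a]
    simp
  apply Measure.ext_of_Iic
  intro a
  have e1 : (Iic a) = (Ioi a)ᶜ := by simp
  rw [e1, measure_compl measurableSet_Ioi (measure_ne_top _ _),
    measure_compl measurableSet_Ioi (measure_ne_top _ _), key a]
  have u1 : ((volume.restrict (Ioo (0:ℝ) 1)).map (decRearr μ f)) univ = 1 := h1.measure_univ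
  have u2 : (μ.map f) univ = 1 := h2.measure_univ
  rw [u1, u2]

lemma integral_comp_decRearr (hfm : Measurable f) {h : ℝ → ℝ} (hh : Measurable h) :
    ∫ t in Ioo (0:ℝ) 1, h (decRearr μ f t) = ∫ z, h (f z) ∂μ := by
  have hGm := decRearr_measurable (μ := μ) (f := f) hfm
  rw [← integral_map hGm.aemeasurable hh.aestronglyMeasurable, map_decRearr hfm,
    integral_map hfm.aemeasurable hh.aestronglyMeasurable]

lemma integrable_comp_decRearr (hfm : Measurable f) {h : ℝ → ℝ} (hh : Measurable h)
    (hint : Integrable (fun z => h (f z)) μ) :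
    IntegrableOn (fun t => h (decRearr μ f t)) (Ioo (0:ℝ) 1) := by
  have hGm := decRearr_measurable (μ := μ) (f := f) hfm
  have h1 : Integrable h (μ.map f) :=
    (integrable_map_measure hh.aestronglyMeasurable hfm.aemeasurable).mpr hint
  rw [← map_decRearr (μ := μ) hfm] at h1
  exact (integrable_map_measure hh.aestronglyMeasurable hGm.aemeasurable).mp h1

lemma integral_decRearr (hfm : Measurable f) (hf : Integrable f μ) :
    ∫ t in (0:ℝ)..1, decRearr μ f t = ∫ z, f z ∂μ := by
  rw [intervalIntegral.integral_of_le zero_le_one]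
  have hres : volume.restrict (Ioc (0:ℝ) 1) = volume.restrict (Ioo (0:ℝ) 1) :=
    (Measure.restrict_congr_set Ioo_ae_eq_Ioc).symm
  show ∫ t in Ioc (0:ℝ) 1, decRearr μ f t = ∫ z, f z ∂μ
  rw [hres]
  exact integral_comp_decRearr hfm measurable_id

lemma bathtub (hfm : Measurable f) (hf : Integrable f μ)
    {g : Z → ℝ} (hg : Integrable g μ) (hg0 : ∀ z, 0 ≤ g z) (hg1 : ∀ z, g z ≤ 1)
    (hfg : Integrable (fun z => f z * g z) μ)
    {s : ℝ} (hs0 : 0 < s) (hs1 : s < 1) (hgs : ∫ z, g z ∂μ = s) :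
    ∫ z, f z * g z ∂μ ≤ ∫ t in (0:ℝ)..s, decRearr μ f t := by
  set a := decRearr μ f s with ha
  have hmax : Measurable (fun x : ℝ => max (x - a) 0) :=
    (measurable_id.sub_const a).max measurable_const
  have hint1 : Integrable (fun z => max (f z - a) 0) μ := by
    have := (hf.sub (integrable_const a)).pos_part
    simpa using this
  have hGint : IntegrableOn (decRearr μ f) (Ioo (0:ℝ) 1) := by
    have := integrable_comp_decRearr (μ := μ) hfm measurable_id hf
    simpa using this
  have hsub : (fun z => (f z - a) * g z) = fun z => f z * g z - a * g z := by
    funext z; ring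
  have hintsub : Integrable (fun z => (f z - a) * g z) μ := by
    rw [hsub]; exact hfg.sub (hg.const_mul a)
  -- step 1
  have e1 : ∫ z, (f z - a) * g z ∂μ = ∫ z, f z * g z ∂μ - a * s := by
    rw [hsub, integral_sub hfg (hg.const_mul a), integral_const_mul, hgs]
  have e2 : ∫ z, (f z - a) * g z ∂μ ≤ ∫ z, max (f z - a) 0 ∂μ := by
    apply integral_mono hintsub hint1
    intro z
    rcases le_or_gt 0 (f z - a) with hz | hz
    · calc (f z - a) * g z ≤ (f z - a) * 1 := mul_le_mul_of_nonneg_left (hg1 z) hz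
        _ = f z - a := mul_one _
        _ ≤ max (f z - a) 0 := le_max_left _ _
    · calc (f z - a) * g z ≤ 0 := mul_nonpos_of_nonpos_of_nonneg hz.le (hg0 z)
        _ ≤ max (f z - a) 0 := le_max_right _ _
  -- step 2 : transfer
  have e3 : ∫ z, max (f z - a) 0 ∂μ
      = ∫ t in Ioo (0:ℝ) 1, max (decRearr μ f t - a) 0 :=
    (integral_comp_decRearr hfm hmax).symm
  have hmaxint : IntegrableOn (fun t => max (decRearr μ f t - a) 0) (Ioo (0:ℝ) 1) :=
    integrable_comp_decRearr (μ := μ) hfm hmax hint1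
  -- step 3 : split
  have hres : volume.restrict (Ioo (0:ℝ) 1) = volume.restrict (Ioc (0:ℝ) 1) :=
    Measure.restrict_congr_set Ioo_ae_eq_Ioc
  have hunion : Ioc (0:ℝ) s ∪ Ioc s 1 = Ioc (0:ℝ) 1 := Ioc_union_Ioc_eq_Ioc hs0.le hs1.le
  have hmaxint' : IntegrableOn (fun t => max (decRearr μ f t - a) 0) (Ioc (0:ℝ) 1) := by
    rw [IntegrableOn, ← hres]; exact hmaxint
  have hsplit : ∫ t in Ioo (0:ℝ) 1, max (decRearr μ f t - a) 0
      = (∫ t in Ioc (0:ℝ) s, max (decRearr μ f t - a) 0)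
        + ∫ t in Ioc s 1, max (decRearr μ f t - a) 0 := by
    rw [show (∫ t in Ioo (0:ℝ) 1, max (decRearr μ f t - a) 0)
        = ∫ t in Ioc (0:ℝ) 1, max (decRearr μ f t - a) 0 from by rw [hres]]
    rw [← hunion]
    exact setIntegral_union (Ioc_disjoint_Ioc_of_le le_rfl) measurableSet_Ioc
      (hmaxint'.mono_set (hunion ▸ subset_union_left))
      (hmaxint'.mono_set (hunion ▸ subset_union_right))
  -- second piece is zero
  have hzero : ∫ t in Ioc s 1, max (decRearr μ f t - a) 0 = 0 := by
    have hres2 : volume.restrict (Ioc s 1) = volume.restrict (Ioo s 1) :=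
      (Measure.restrict_congr_set Ioo_ae_eq_Ioc).symm
    rw [show (∫ t in Ioc s 1, max (decRearr μ f t - a) 0)
        = ∫ t in Ioo s 1, max (decRearr μ f t - a) 0 from by rw [hres2]]
    have h0 : EqOn (fun t => max (decRearr μ f t - a) 0) (fun _ => (0:ℝ)) (Ioo s 1) := by
      intro t ht
      have hGa : decRearr μ f t ≤ a :=
        decRearr_antitoneOn hfm ⟨hs0, hs1⟩ ⟨lt_trans hs0 ht.1, ht.2⟩ ht.1.le
      simp only
      rw [max_eq_right (sub_nonpos.mpr hGa)]
    rw [setIntegral_congr_fun measurableSet_Ioo h0]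
    simp
  -- first piece
  have hGsub : Ioc (0:ℝ) s ⊆ Ioo (0:ℝ) 1 := fun t ht => ⟨ht.1, lt_of_le_of_lt ht.2 hs1⟩
  have hGint2 : IntegrableOn (decRearr μ f) (Ioc (0:ℝ) s) := hGint.mono_set hGsub
  have hfirst : ∫ t in Ioc (0:ℝ) s, max (decRearr μ f t - a) 0
      = (∫ t in Ioc (0:ℝ) s, decRearr μ f t) - a * s := by
    have h0 : EqOn (fun t => max (decRearr μ f t - a) 0)
        (fun t => decRearr μ f t - a) (Ioc (0:ℝ) s) := by
      intro t ht
      have hGa : a ≤ decRearr μ f t :=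
        decRearr_antitoneOn hfm ⟨ht.1, lt_of_le_of_lt ht.2 hs1⟩ ⟨hs0, hs1⟩ ht.2
      simp only
      rw [max_eq_left (sub_nonneg.mpr hGa)]
    rw [setIntegral_congr_fun measurableSet_Ioc h0,
      integral_sub hGint2 (integrableOn_const measure_Ioc_lt_top.ne),
      setIntegral_const]
    rw [Measure.real, Real.volume_Ioc]
    simp only [smul_eq_mul]
    rw [ENNReal.toReal_ofReal (by linarith)]
    ring
  have final : ∫ t in (0:ℝ)..s, decRearr μ f t = ∫ t in Ioc (0:ℝ) s, decRearr μ f t :=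
    intervalIntegral.integral_of_le hs0.le
  calc ∫ z, f z * g z ∂μ = (∫ z, (f z - a) * g z ∂μ) + a * s := by rw [e1]; ring
    _ ≤ (∫ z, max (f z - a) 0 ∂μ) + a * s := by linarith [e2]
    _ = (∫ t in Ioo (0:ℝ) 1, max (decRearr μ f t - a) 0) + a * s := by rw [e3]
    _ = (∫ t in Ioc (0:ℝ) s, decRearr μ f t) - a * s + 0 + a * s := by
        rw [hsplit, hzero, hfirst]
    _ = ∫ t in (0:ℝ)..s, decRearr μ f t := by rw [final]; ring

lemma decRearr_congr {f g : Z → ℝ} (h : f =ᵐ[μ] g) : decRearr μ f = decRearr μ g := by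
  have hmeas : ∀ a : ℝ, μ {x | a < f x} = μ {x | a < g x} := by
    intro a
    apply measure_congr
    filter_upwards [h] with x hx
    exact congrArg (fun y => a < y) hx
  funext t
  unfold decRearr
  congr 1
  ext a
  simp only [mem_setOf_eq, hmeas a]

end BLaux

namespace BLmat

variable {N : ℕ}

lemma psd_diag_nonneg {Q : Matrix (Fin N) (Fin N) ℂ} (hQ : Q.PosSemidef) (j : Fin N) :
    0 ≤ Q j j := by
  exact hQ.diag_nonneg

lemma trace_diagonal_mul (d : Fin N → ℂ) (B : Matrix (Fin N) (Fin N) ℂ) :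
    (Matrix.diagonal d * B).trace = ∑ j, d j * B j j := by
  simp [Matrix.trace, Matrix.diag, Matrix.diagonal_mul]

lemma trace_conj_diag (U : Matrix.unitaryGroup (Fin N) ℂ) (d : Fin N → ℂ)
    (B : Matrix (Fin N) (Fin N) ℂ) :
    (((U : Matrix (Fin N) (Fin N) ℂ) * Matrix.diagonal d
        * (star (U : Matrix (Fin N) (Fin N) ℂ))) * B).trace
      = ∑ j, d j * ((star (U : Matrix (Fin N) (Fin N) ℂ) * B
          * (U : Matrix (Fin N) (Fin N) ℂ)) j j) := by
  calc (((U : Matrix (Fin N) (Fin N) ℂ) * Matrix.diagonal d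
        * (star (U : Matrix (Fin N) (Fin N) ℂ))) * B).trace
      = (((U : Matrix (Fin N) (Fin N) ℂ) * Matrix.diagonal d)
          * ((star (U : Matrix (Fin N) (Fin N) ℂ)) * B)).trace := by rw [Matrix.mul_assoc]
    _ = (((star (U : Matrix (Fin N) (Fin N) ℂ)) * B)
          * ((U : Matrix (Fin N) (Fin N) ℂ) * Matrix.diagonal d)).trace :=
        Matrix.trace_mul_comm _ _
    _ = ((((star (U : Matrix (Fin N) (Fin N) ℂ)) * B) * (U : Matrix (Fin N) (Fin N) ℂ))
          * Matrix.diagonal d).trace := by noncomm_ring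
    _ = (Matrix.diagonal d * (((star (U : Matrix (Fin N) (Fin N) ℂ)) * B)
          * (U : Matrix (Fin N) (Fin N) ℂ))).trace := Matrix.trace_mul_comm _ _
    _ = ∑ j, d j * ((star (U : Matrix (Fin N) (Fin N) ℂ) * B
          * (U : Matrix (Fin N) (Fin N) ℂ)) j j) := trace_diagonal_mul d _

lemma trace_conj_diag_mul_nonneg (U : Matrix.unitaryGroup (Fin N) ℂ) (c : Fin N → ℝ)
    (hc : ∀ j, 0 ≤ c j) {Q : Matrix (Fin N) (Fin N) ℂ} (hQ : Q.PosSemidef) :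
    0 ≤ (((U : Matrix (Fin N) (Fin N) ℂ) * Matrix.diagonal (fun j => (c j : ℂ))
        * (star (U : Matrix (Fin N) (Fin N) ℂ))) * Q).trace := by
  rw [trace_conj_diag]
  apply Finset.sum_nonneg
  intro j _
  have hB : ((star (U : Matrix (Fin N) (Fin N) ℂ)) * Q
      * (U : Matrix (Fin N) (Fin N) ℂ)).PosSemidef := by
    have h := hQ.conjTranspose_mul_mul_same (U : Matrix (Fin N) (Fin N) ℂ)
    simpa [Matrix.star_eq_conjTranspose] using h
  exact mul_nonneg (Complex.zero_le_real.mpr (hc j)) (psd_diag_nonneg hB j)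

lemma entry_norm_le_one {Q : Matrix (Fin N) (Fin N) ℂ} (hherm : Q.IsHermitian)
    (hidem : Q * Q = Q) (htr : Q.trace = 1) (i j : Fin N) : ‖Q i j‖ ≤ 1 := by
  have hdecomp : Q = Qᴴ * Q := by
    conv_lhs => rw [← hidem]
    rw [hherm.eq]
  have hdiag : ∀ l, Q l l = ((∑ k, Complex.normSq (Q k l) : ℝ) : ℂ) := by
    intro l
    conv_lhs => rw [hdecomp]
    simp only [Matrix.mul_apply, Matrix.conjTranspose_apply, Complex.star_def,
      ← Complex.normSq_eq_conj_mul_self]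
    norm_cast
  have hsum : (∑ l, ∑ k, Complex.normSq (Q k l)) = 1 := by
    have h1 : (1:ℂ) = ((∑ l, ∑ k, Complex.normSq (Q k l) : ℝ) : ℂ) := by
      rw [← htr, Matrix.trace, Complex.ofReal_sum]
      exact Finset.sum_congr rfl fun l _ => by rw [Matrix.diag_apply, hdiag l]
    exact_mod_cast h1.symm
  have hterm : Complex.normSq (Q i j) ≤ 1 := by
    rw [← hsum]
    calc Complex.normSq (Q i j) ≤ ∑ k, Complex.normSq (Q k j) :=
          Finset.single_le_sum (f := fun k => Complex.normSq (Q k j))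
            (fun k _ => Complex.normSq_nonneg _) (Finset.mem_univ i)
      _ ≤ ∑ l, ∑ k, Complex.normSq (Q k l) :=
          Finset.single_le_sum (f := fun l => ∑ k, Complex.normSq (Q k l))
            (fun l _ => Finset.sum_nonneg fun k _ => Complex.normSq_nonneg _)
            (Finset.mem_univ j)
  have h2 : ‖Q i j‖ ^ 2 ≤ 1 := by
    rw [← Complex.normSq_eq_norm_sq]
    exact hterm
  nlinarith [norm_nonneg (Q i j)]

lemma sum_w_mul {k : ℕ} (hk : k < N) (θ : ℝ) (v : ℕ → ℝ) :
    (∑ i : Fin N, (if (i : ℕ) < k then (1:ℝ) else if (i : ℕ) = k then θ else 0) * v i)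
      = (∑ i ∈ Finset.range k, v i) + θ * v k := by
  rw [Fin.sum_univ_eq_sum_range (fun i => (if i < k then (1:ℝ) else if i = k then θ else 0) * v i)]
  have hsplit : ∀ i, (if i < k then (1:ℝ) else if i = k then θ else 0) * v i
      = (if i < k then v i else 0) + (if i = k then θ * v i else 0) := by
    intro i
    by_cases h1 : i < k
    · simp [h1, Nat.ne_of_lt h1]
    · by_cases h2 : i = k
      · simp [h1, h2]
      · simp [h1, h2]
  rw [Finset.sum_congr rfl fun i _ => hsplit i, Finset.sum_add_distrib]
  congr 1
  · rw [← Finset.sum_subset (Finset.range_subset_range.mpr hk.le)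
      (fun x _ hx => by simp [Finset.mem_range.not.mp hx])]
    exact Finset.sum_congr rfl fun i hi => by simp [Finset.mem_range.mp hi]
  · rw [Finset.sum_ite_eq' (Finset.range N) k (fun i => θ * v i)]
    simp [Finset.mem_range.mpr hk]

lemma trace_mul_eq_sum (X B : Matrix (Fin N) (Fin N) ℂ) :
    (X * B).trace = ∑ i, ∑ j, X i j * B j i := by
  simp [Matrix.trace, Matrix.diag, Matrix.mul_apply]

lemma trace_conj (U : Matrix.unitaryGroup (Fin N) ℂ) (A : Matrix (Fin N) (Fin N) ℂ) :
    ((U : Matrix (Fin N) (Fin N) ℂ) * A * (star (U : Matrix (Fin N) (Fin N) ℂ))).trace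
      = A.trace := by
  rw [Matrix.trace_mul_cycle]
  rw [show (star (U : Matrix (Fin N) (Fin N) ℂ)) * (U : Matrix (Fin N) (Fin N) ℂ) = 1 from
    Matrix.mem_unitaryGroup_iff'.mp U.2]
  rw [Matrix.one_mul]

end BLmat

open scoped ComplexOrder


/-- Berezin–Lieb inequality for Op in majorization form: the interpolated
partial sums of the decreasing eigenvalues of Op[f] are bounded by the partial
integrals of the decreasing rearrangement of f, with equality at s = 1. -/
theorem berezin_lieb_op (N : ℕ) (hN : 0 < N)
    {Z : Type*} [MeasurableSpace Z] (μ : Measure Z) [IsProbabilityMeasure μ]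
    (P : Z → Matrix (Fin N) (Fin N) ℂ)
    (hint : ∀ i j, Integrable (fun z => P z i j) μ)
    (hherm : ∀ z, (P z).IsHermitian)
    (hidem : ∀ z, P z * P z = P z)
    (hrank : ∀ z, (P z).trace = 1)
    (hres : ∀ i j, ∫ z, P z i j ∂μ = ((N : ℂ))⁻¹ * (1 : Matrix (Fin N) (Fin N) ℂ) i j)
    (f : Z → ℝ) (hf : Integrable f μ)
    (M : Matrix (Fin N) (Fin N) ℂ)
    (hM : M = Matrix.of fun i j => (N : ℂ) * ∫ z, (f z : ℂ) * P z i j ∂μ)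
    (hMh : M.IsHermitian)
    (lam : ℕ → ℝ)
    (hsort : ∀ i j : ℕ, i ≤ j → j < N → lam j ≤ lam i)
    (henum : ∃ e : Fin N ≃ Fin N, ∀ i : Fin N, lam i = hMh.eigenvalues (e i)) :
    (∀ s : ℝ, 0 ≤ s → s < 1 →
      ((N : ℝ))⁻¹ * ∑ i ∈ Finset.range ⌊s * N⌋₊, lam i
          + ((s * N - ⌊s * N⌋₊) / N) * lam ⌊s * N⌋₊
        ≤ ∫ t in (0:ℝ)..s, decRearr μ f t)
    ∧
    ((N : ℝ))⁻¹ * ∑ i ∈ Finset.range N, lam i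
        = ∫ t in (0:ℝ)..1, decRearr μ f t := by
  obtain ⟨e, he⟩ := henum
  -- measurable representative of f
  set f' : Z → ℝ := hf.1.mk f with hf'def
  have hff' : f =ᵐ[μ] f' := hf.1.ae_eq_mk
  have hf'm : Measurable f' := hf.1.stronglyMeasurable_mk.measurable
  have hf' : Integrable f' μ := hf.congr hff'
  have hdec : decRearr μ f = decRearr μ f' := BLaux.decRearr_congr hff'
  have hNR : (0:ℝ) < N := by exact_mod_cast hN
  have hNC : (N:ℂ) ≠ 0 := by exact_mod_cast hNR.ne'
  -- basic facts about P
  have hPpsd : ∀ z, (P z).PosSemidef := fun z => by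
    have h := Matrix.posSemidef_conjTranspose_mul_self (P z)
    rwa [(hherm z).eq, hidem z] at h
  have hPnorm : ∀ z i j, ‖P z i j‖ ≤ 1 := fun z =>
    BLmat.entry_norm_le_one (hherm z) (hidem z) (hrank z)
  have hfP : ∀ i j, Integrable (fun z => (f z : ℂ) * P z i j) μ := by
    intro i j
    refine Integrable.mono' hf.norm
      ((Complex.continuous_ofReal.comp_aestronglyMeasurable hf.1).mul (hint i j).1) ?_
    filter_upwards with z
    rw [norm_mul, Complex.norm_real]
    calc ‖f z‖ * ‖P z i j‖ ≤ ‖f z‖ * 1 :=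
          mul_le_mul_of_nonneg_left (hPnorm z i j) (norm_nonneg _)
      _ = ‖f z‖ := mul_one _
  -- spectral data
  set U := hMh.eigenvectorUnitary with hU
  have hspec : M = (U : Matrix (Fin N) (Fin N) ℂ)
      * Matrix.diagonal (RCLike.ofReal ∘ hMh.eigenvalues)
      * (star (U : Matrix (Fin N) (Fin N) ℂ)) := hMh.spectral_theorem
  have hUU : (star (U : Matrix (Fin N) (Fin N) ℂ)) * (U : Matrix (Fin N) (Fin N) ℂ) = 1 :=
    Matrix.mem_unitaryGroup_iff'.mp U.2
  have hUU' : (U : Matrix (Fin N) (Fin N) ℂ) * (star (U : Matrix (Fin N) (Fin N) ℂ)) = 1 :=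
    Matrix.mem_unitaryGroup_iff.mp U.2
  -- trace M two ways
  have htraceM : M.trace = (N:ℂ) * ∫ z, (f z : ℂ) ∂μ := by
    have h1 : M.trace = ∑ i, (N:ℂ) * ∫ z, (f z:ℂ) * P z i i ∂μ := by
      rw [Matrix.trace]
      exact Finset.sum_congr rfl fun i _ => by rw [Matrix.diag_apply, hM]; rfl
    rw [h1, ← Finset.mul_sum, ← integral_finset_sum _ (fun i _ => hfP i i)]
    congr 1
    apply integral_congr_ae
    filter_upwards with z
    rw [← Finset.mul_sum]
    have : ∑ i, P z i i = (P z).trace := rfl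
    rw [this, hrank z, mul_one]
  have hsumeig : M.trace = ((∑ j, hMh.eigenvalues j : ℝ) : ℂ) := by
    conv_lhs => rw [hspec]
    rw [BLmat.trace_conj, Matrix.trace_diagonal]
    push_cast
    rfl
  have heigint : (∑ j, hMh.eigenvalues j) = (N:ℝ) * ∫ z, f z ∂μ := by
    have h2 : ((∑ j, hMh.eigenvalues j : ℝ) : ℂ) = (((N:ℝ) * ∫ z, f z ∂μ : ℝ) : ℂ) := by
      rw [← hsumeig, htraceM, integral_complex_ofReal]
      push_cast
      ring
    exact_mod_cast h2
  have hsum_lam : ∑ i ∈ Finset.range N, lam i = ∑ j, hMh.eigenvalues j := by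
    rw [← Fin.sum_univ_eq_sum_range (fun i => lam i)]
    rw [Finset.sum_congr rfl fun i _ => he i]
    exact Equiv.sum_comp e _
  constructor
  · -- the inequality
    intro s hs0 hs1
    rcases eq_or_lt_of_le hs0 with rfl | hs0'
    · simp [intervalIntegral.integral_same]
    -- now 0 < s < 1
    set k := ⌊s * N⌋₊ with hk
    set θ := s * N - k with hθ
    have hsN0 : 0 < s * N := by positivity
    have hkN : k < N := by
      rw [hk]
      rw [Nat.floor_lt hsN0.le]
      nlinarith
    have hθ0 : 0 ≤ θ := sub_nonneg.mpr (Nat.floor_le hsN0.le)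
    have hθ1 : θ < 1 := by
      have := Nat.lt_floor_add_one (s * N)
      rw [hθ]
      push_cast
      linarith
    have hskθ : s = ((k:ℝ) + θ) / N := by
      rw [hθ]
      field_simp
      ring
    set w : Fin N → ℝ := fun i => if (i:ℕ) < k then 1 else if (i:ℕ) = k then θ else 0 with hw
    set dR : Fin N → ℝ := fun j => w (e.symm j) with hdR
    have hw0 : ∀ i, 0 ≤ w i := by
      intro i; rw [hw]; dsimp only
      split_ifs <;> norm_num [hθ0]
    have hw1 : ∀ i, w i ≤ 1 := by
      intro i; rw [hw]; dsimp only
      split_ifs <;> norm_num [hθ1.le]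
    have hd0 : ∀ j, 0 ≤ dR j := fun j => hw0 _
    have hd1 : ∀ j, dR j ≤ 1 := fun j => hw1 _
    set X := (U : Matrix (Fin N) (Fin N) ℂ) * Matrix.diagonal (fun j => (dR j : ℂ))
      * (star (U : Matrix (Fin N) (Fin N) ℂ)) with hX
    -- trace of X * M
    have hXM : (X * M).trace
        = ∑ j, (dR j : ℂ) * (RCLike.ofReal (hMh.eigenvalues j) : ℂ) := by
      have h1 : X * M = (U : Matrix (Fin N) (Fin N) ℂ)
          * (Matrix.diagonal (fun j => (dR j : ℂ))
            * Matrix.diagonal (RCLike.ofReal ∘ hMh.eigenvalues))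
          * (star (U : Matrix (Fin N) (Fin N) ℂ)) := by
        conv_lhs => rw [hspec]
        rw [hX]
        have h2 : (star (U : Matrix (Fin N) (Fin N) ℂ))
            * ((U : Matrix (Fin N) (Fin N) ℂ)
              * (Matrix.diagonal (RCLike.ofReal ∘ hMh.eigenvalues)
                * (star (U : Matrix (Fin N) (Fin N) ℂ))))
            = Matrix.diagonal (RCLike.ofReal ∘ hMh.eigenvalues)
              * (star (U : Matrix (Fin N) (Fin N) ℂ)) := by
          rw [← Matrix.mul_assoc, hUU, Matrix.one_mul]
        simp only [Matrix.mul_assoc]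
        rw [h2]
      rw [h1, BLmat.trace_conj, Matrix.diagonal_mul_diagonal, Matrix.trace_diagonal]
      rfl
    have hT : (X * M).trace
        = (((∑ i ∈ Finset.range k, lam i) + θ * lam k : ℝ) : ℂ) := by
      rw [hXM]
      have h3 : ∑ j, (dR j : ℂ) * (RCLike.ofReal (hMh.eigenvalues j) : ℂ)
          = ((∑ j, dR j * hMh.eigenvalues j : ℝ) : ℂ) := by
        push_cast
        rfl
      rw [h3]
      congr 1
      have h4 : ∑ j, dR j * hMh.eigenvalues j
          = ∑ i, dR (e i) * hMh.eigenvalues (e i) := (Equiv.sum_comp e _).symm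
      rw [h4]
      have h5 : ∀ i : Fin N, dR (e i) * hMh.eigenvalues (e i) = w i * lam i := by
        intro i
        rw [hdR]
        dsimp only
        rw [Equiv.symm_apply_apply, he i]
      rw [Finset.sum_congr rfl fun i _ => h5 i]
      exact BLmat.sum_w_mul hkN θ lam
    have hTrX : X.trace = (((k:ℝ) + θ : ℝ) : ℂ) := by
      rw [hX, BLmat.trace_conj, Matrix.trace_diagonal]
      have h3 : ∑ j, ((dR j : ℝ) : ℂ) = ((∑ j, dR j : ℝ) : ℂ) := by push_cast; rfl
      rw [h3]
      congr 1
      have h4 : ∑ j, dR j = ∑ i, w i := by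
        rw [hdR]
        exact Equiv.sum_comp e.symm w
      rw [h4]
      have h5 := BLmat.sum_w_mul hkN θ (fun _ => (1:ℝ))
      simp only [mul_one] at h5
      rw [hw]
      rw [h5]
      simp
    -- positivity facts
    have hXP0 : ∀ z, 0 ≤ (X * P z).trace := fun z =>
      BLmat.trace_conj_diag_mul_nonneg U dR hd0 (hPpsd z)
    have h1mX : (1 : Matrix (Fin N) (Fin N) ℂ) - X
        = (U : Matrix (Fin N) (Fin N) ℂ)
          * Matrix.diagonal (fun j => ((1 - dR j : ℝ) : ℂ))
          * (star (U : Matrix (Fin N) (Fin N) ℂ)) := by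
      have hdd : Matrix.diagonal (fun j => ((1 - dR j : ℝ) : ℂ))
          = 1 - Matrix.diagonal (fun j => (dR j : ℂ)) := by
        ext i j
        by_cases hij : i = j
        · subst hij
          simp only [Matrix.diagonal_apply_eq, Matrix.sub_apply, Matrix.one_apply_eq]
          push_cast
          ring
        · simp [Matrix.diagonal_apply_ne _ hij, Matrix.one_apply_ne hij]
      rw [hdd, Matrix.mul_sub, Matrix.mul_one, Matrix.sub_mul, hUU', hX]
    have hXP1 : ∀ z, ((X * P z).trace).re ≤ 1 := by
      intro z
      have h := BLmat.trace_conj_diag_mul_nonneg U (fun j => 1 - dR j)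
        (fun j => by show (0:ℝ) ≤ 1 - dR j; linarith [hd1 j]) (hPpsd z)
      rw [← h1mX] at h
      rw [Matrix.sub_mul, Matrix.trace_sub, Matrix.one_mul, hrank z] at h
      have h2 := (Complex.le_def.mp h).1
      simp only [Complex.zero_re, Complex.sub_re, Complex.one_re] at h2
      linarith
    have hXPim : ∀ z, ((X * P z).trace).im = 0 := fun z =>
      ((Complex.le_def.mp (hXP0 z)).2).symm
    set g : Z → ℝ := fun z => ((X * P z).trace).re with hg
    have hgLift : ∀ z, ((g z : ℝ) : ℂ) = (X * P z).trace := by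
      intro z
      apply Complex.ext
      · simp [hg]
      · simp [hg, hXPim z]
    have hg0 : ∀ z, 0 ≤ g z := by
      intro z
      have h2 := (Complex.le_def.mp (hXP0 z)).1
      simpa using h2
    have hg1 : ∀ z, g z ≤ 1 := hXP1
    -- integrability of trace (X * P z)
    have hTrInt : Integrable (fun z => (X * P z).trace) μ := by
      have h1 : (fun z => (X * P z).trace) = fun z => ∑ i, ∑ j, X i j * P z j i :=
        funext fun z => BLmat.trace_mul_eq_sum X (P z)
      rw [h1]
      apply integrable_finset_sum
      intro i _
      apply integrable_finset_sum
      intro j _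
      exact (hint j i).const_mul (X i j)
    have hgInt : Integrable g μ := by
      have := hTrInt.re
      simpa [hg] using this
    -- ∫ trace (X * P z) = N⁻¹ * trace X
    have hIT : ∫ z, (X * P z).trace ∂μ = (N:ℂ)⁻¹ * X.trace := by
      have h1 : ∫ z, (X * P z).trace ∂μ = ∑ i, ∑ j, X i j * ∫ z, P z j i ∂μ := by
        rw [show (fun z => (X * P z).trace) = fun z => ∑ i, ∑ j, X i j * P z j i from
          funext fun z => BLmat.trace_mul_eq_sum X (P z)]
        rw [integral_finset_sum _ (fun i _ => integrable_finset_sum _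
          (fun j _ => (hint j i).const_mul (X i j)))]
        exact Finset.sum_congr rfl fun i _ => by
          rw [integral_finset_sum _ (fun j _ => (hint j i).const_mul (X i j))]
          exact Finset.sum_congr rfl fun j _ => integral_const_mul _ _
      rw [h1]
      have h2 : ∀ i j : Fin N, X i j * ∫ z, P z j i ∂μ
          = (N:ℂ)⁻¹ * (X i j * (1 : Matrix (Fin N) (Fin N) ℂ) j i) := by
        intro i j
        rw [hres j i]
        ring
      rw [Finset.sum_congr rfl fun i _ => Finset.sum_congr rfl fun j _ => h2 i j]
      have h3 : ∀ i : Fin N, ∑ j, (N:ℂ)⁻¹ * (X i j * (1 : Matrix (Fin N) (Fin N) ℂ) j i)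
          = (N:ℂ)⁻¹ * X i i := by
        intro i
        rw [← Finset.mul_sum]
        congr 1
        have h4 : ∀ j, X i j * (1 : Matrix (Fin N) (Fin N) ℂ) j i
            = if j = i then X i i else 0 := by
          intro j
          rw [Matrix.one_apply]
          by_cases hji : j = i
          · subst hji; simp
          · simp [hji]
        rw [Finset.sum_congr rfl fun j _ => h4 j]
        simp
      rw [Finset.sum_congr rfl fun i _ => h3 i, ← Finset.mul_sum]
      congr 1
    -- value of ∫ g
    have hgs : ∫ z, g z ∂μ = s := by
      have h1 : ((∫ z, g z ∂μ : ℝ) : ℂ) = (N:ℂ)⁻¹ * (((k:ℝ) + θ : ℝ) : ℂ) := by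
        rw [← integral_complex_ofReal,
          integral_congr_ae (Filter.Eventually.of_forall hgLift), hIT, hTrX]
      have h2 : ∫ z, g z ∂μ = ((k:ℝ) + θ) / N := by
        have h3 : ((∫ z, g z ∂μ : ℝ) : ℂ) = ((((k:ℝ) + θ) / N : ℝ) : ℂ) := by
          rw [h1]
          push_cast
          field_simp
        exact_mod_cast h3
      rw [h2, ← hskθ]
    -- integrability of f * g
    have hfgInt : Integrable (fun z => f z * g z) μ := by
      refine Integrable.mono' hf.norm (hf.1.mul hgInt.1) ?_
      filter_upwards with z
      rw [norm_mul, Real.norm_eq_abs (g z), abs_of_nonneg (hg0 z)]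
      calc ‖f z‖ * g z ≤ ‖f z‖ * 1 := mul_le_mul_of_nonneg_left (hg1 z) (norm_nonneg _)
        _ = ‖f z‖ := mul_one _
    -- trace (X * M) = N * ∫ f g
    have hXMint : (X * M).trace = (N:ℂ) * ((∫ z, f z * g z ∂μ : ℝ) : ℂ) := by
      have hMji : ∀ j i : Fin N, M j i = (N:ℂ) * ∫ z, (f z:ℂ) * P z j i ∂μ := by
        intro j i; rw [hM]; rfl
      have h1 : (X * M).trace = ∑ i, ∑ j, (N:ℂ) * (X i j * ∫ z, (f z:ℂ) * P z j i ∂μ) := by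
        rw [BLmat.trace_mul_eq_sum]
        exact Finset.sum_congr rfl fun i _ => Finset.sum_congr rfl fun j _ => by
          rw [hMji j i]; ring
      rw [h1]
      simp only [← Finset.mul_sum]
      congr 1
      rw [Finset.sum_congr rfl fun i _ => Finset.sum_congr rfl fun j _ =>
        (integral_const_mul (X i j) _).symm]
      rw [Finset.sum_congr rfl (fun i _ =>
        (integral_finset_sum _ (fun j _ => ((hfP j i).const_mul (X i j)))).symm)]
      rw [← integral_finset_sum _ (fun i _ => integrable_finset_sum _
        (fun j _ => (hfP j i).const_mul (X i j)))]
      rw [← integral_complex_ofReal]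
      apply integral_congr_ae
      filter_upwards with z
      have hz : ((f z * g z : ℝ) : ℂ) = (f z : ℂ) * (X * P z).trace := by
        rw [← hgLift z]; push_cast; ring
      rw [hz, BLmat.trace_mul_eq_sum, Finset.mul_sum]
      exact (Finset.sum_congr rfl fun i _ => by
        rw [Finset.mul_sum]
        exact Finset.sum_congr rfl fun j _ => by ring).symm
    -- T = N * ∫ f g over ℝ
    have hTreal : (∑ i ∈ Finset.range k, lam i) + θ * lam k
        = (N:ℝ) * ∫ z, f z * g z ∂μ := by
      have hc := hT.symm.trans hXMint
      have h2 : (((∑ i ∈ Finset.range k, lam i) + θ * lam k : ℝ) : ℂ)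
          = (((N:ℝ) * ∫ z, f z * g z ∂μ : ℝ) : ℂ) := by
        rw [hc]; push_cast; ring
      exact_mod_cast h2
    -- bathtub
    have hione : ∫ z, f z * g z ∂μ = ∫ z, f' z * g z ∂μ :=
      integral_congr_ae (hff'.mono fun z hz => by simp only [hz])
    have hfg' : Integrable (fun z => f' z * g z) μ :=
      hfgInt.congr (hff'.mono fun z hz => by simp only [hz])
    have hbath := BLaux.bathtub hf'm hf' hgInt hg0 hg1 hfg' hs0' hs1 hgs
    have hLHS : ((N:ℝ))⁻¹ * (∑ i ∈ Finset.range k, lam i) + (θ / N) * lam k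
        = ∫ z, f' z * g z ∂μ := by
      rw [← hione]
      have hInt : ∫ z, f z * g z ∂μ
          = ((∑ i ∈ Finset.range k, lam i) + θ * lam k) / N := by
        rw [hTreal]
        field_simp
      rw [hInt]
      field_simp
    calc ((N:ℝ))⁻¹ * ∑ i ∈ Finset.range k, lam i + (θ / N) * lam k
        = ∫ z, f' z * g z ∂μ := hLHS
      _ ≤ ∫ t in (0:ℝ)..s, decRearr μ f' t := hbath
      _ = ∫ t in (0:ℝ)..s, decRearr μ f t := by rw [hdec]
  · -- the equality
    rw [hdec, BLaux.integral_decRearr hf'm hf']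
    rw [hsum_lam, heigint]
    rw [← integral_congr_ae hff']
    field_simp
end

section
/- Let B : L²(Z) → L²(Z) be a self-adjoint operator on a probability space with spectral decomposition B = Σ_{n=0}^m c_n Π_n where Π_n are orthogonal projections summing to a projection onto a subspace containing constants, 0 ≤ c_n ≤ 1, c_0 = 1. Suppose B f = Σ_n c_n Π_n f and D f = Σ_n λ_n Π_n f with λ_n ≥ 0, λ_0 = 0, and that c_n = ∏_{k=1}^∞ (1 − λ_n/((m+k)(m+k+d-1))) for all n. Then B = Υ_m(D) in the functional calculus, where Υ_m(z) = ∏_{k≥1}(1 − z/((m+k)(m+k+d-1))). -/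
open Filter
open scoped BigOperators

section
variable {E : Type*} [NormedAddCommGroup E] [InnerProductSpace ℂ E]

/-- Eigenvector of partial products. -/
lemma aux_eig_prod (m d : ℕ) (D : E →L[ℂ] E) (μ : ℝ) (v : E) (hv : D v = (μ : ℂ) • v) :
    ∀ K : ℕ,
      (((List.range K).map
        (fun k => (1 : E →L[ℂ] E)
          - ((((m : ℂ) + k + 1) * ((m : ℂ) + k + d))⁻¹) • D)).prod) v
      = (↑(∏ k ∈ Finset.range K, (1 - μ / ((m + k + 1) * (m + k + d)) : ℝ)) : ℂ) • v := by
  intro K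
  induction K with
  | zero => simp
  | succ K ih =>
    have hsplit :
        (((List.range (K+1)).map
          (fun k => (1 : E →L[ℂ] E)
            - ((((m : ℂ) + k + 1) * ((m : ℂ) + k + d))⁻¹) • D)).prod)
        = (((List.range K).map
          (fun k => (1 : E →L[ℂ] E)
            - ((((m : ℂ) + k + 1) * ((m : ℂ) + k + d))⁻¹) • D)).prod) *
          ((1 : E →L[ℂ] E) - ((((m : ℂ) + K + 1) * ((m : ℂ) + K + d))⁻¹) • D) := by
      rw [List.range_succ]; simp
    rw [hsplit, Finset.prod_range_succ, ContinuousLinearMap.mul_apply]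
    have hfac : ((1 : E →L[ℂ] E) - ((((m : ℂ) + K + 1) * ((m : ℂ) + K + d))⁻¹) • D) v
        = (↑(1 - μ / ((m + K + 1) * (m + K + d)) : ℝ) : ℂ) • v := by
      rw [ContinuousLinearMap.sub_apply, ContinuousLinearMap.smul_apply,
        ContinuousLinearMap.one_apply, hv, smul_smul]
      rw [show v - (((↑m + ↑K + 1) * ((↑m:ℂ) + ↑K + ↑d))⁻¹ * ↑μ) • v
            = ((1:ℂ) - (((↑m + ↑K + 1) * ((↑m:ℂ) + ↑K + ↑d))⁻¹ * ↑μ)) • v by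
          rw [sub_smul, one_smul]]
      congr 1
      push_cast
      ring
    rw [hfac, ContinuousLinearMap.map_smul, ih, smul_smul, ← Complex.ofReal_mul, mul_comm]

/-- Pythagoras for pairwise-orthogonal finite families. -/
lemma aux_pythagoras {ι : Type*} (s : Finset ι) (f : ι → E)
    (h : ∀ i ∈ s, ∀ j ∈ s, i ≠ j → (inner ℂ (f i) (f j) : ℂ) = 0) :
    ‖∑ i ∈ s, f i‖ ^ 2 = ∑ i ∈ s, ‖f i‖ ^ 2 := by
  have key : (inner ℂ (∑ i ∈ s, f i) (∑ i ∈ s, f i) : ℂ) = ∑ i ∈ s, (inner ℂ (f i) (f i) : ℂ) := by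
    rw [sum_inner]
    refine Finset.sum_congr rfl fun i hi => ?_
    rw [inner_sum, Finset.sum_eq_single_of_mem i hi]
    intro j hj hji
    exact h i hi j hj (Ne.symm hji)
  have h2 := norm_sq_eq_re_inner (𝕜 := ℂ) (∑ i ∈ s, f i)
  rw [h2, key, map_sum]
  exact Finset.sum_congr rfl fun i _ => (norm_sq_eq_re_inner (𝕜 := ℂ) (f i)).symm

end

/-- Uniform bound on the partial products. -/
lemma aux_prod_bound (m d : ℕ) (hd : 1 ≤ d) (C μ : ℝ) (hμ0 : 0 ≤ μ) (hμC : μ ≤ C) (K : ℕ) :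
    |∏ k ∈ Finset.range K, (1 - μ / ((m + k + 1) * (m + k + d)) : ℝ)|
      ≤ Real.exp (C * ∑' k : ℕ, 1 / ((k : ℝ) + 1) ^ 2) := by
  have hC : 0 ≤ C := le_trans hμ0 hμC
  have hsum : Summable (fun k : ℕ => 1 / ((k : ℝ) + 1) ^ 2) := by
    have := (summable_nat_add_iff (f := fun n : ℕ => 1 / (n : ℝ) ^ 2) 1).2
      (Real.summable_one_div_nat_pow.mpr one_lt_two)
    simpa using this
  have hq : ∀ k : ℕ, (0:ℝ) < ((m : ℝ) + k + 1) * ((m : ℝ) + k + d)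
      ∧ ((k : ℝ) + 1) ^ 2 ≤ ((m : ℝ) + k + 1) * ((m : ℝ) + k + d) := by
    intro k
    have hm : (0:ℝ) ≤ m := Nat.cast_nonneg m
    have hk : (0:ℝ) ≤ k := Nat.cast_nonneg k
    have hdd : (1:ℝ) ≤ d := by exact_mod_cast hd
    constructor
    · nlinarith
    · nlinarith
  calc |∏ k ∈ Finset.range K, (1 - μ / ((m + k + 1) * (m + k + d)) : ℝ)|
      ≤ ∏ k ∈ Finset.range K, (1 + μ / (((m:ℝ) + k + 1) * ((m:ℝ) + k + d))) := by
        rw [Finset.abs_prod]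
        refine Finset.prod_le_prod (fun k _ => abs_nonneg _) (fun k _ => ?_)
        have ht : 0 ≤ μ / (((m:ℝ) + k + 1) * ((m:ℝ) + k + d)) :=
          div_nonneg hμ0 (hq k).1.le
        rw [abs_le]
        constructor <;> linarith
    _ ≤ ∏ k ∈ Finset.range K, Real.exp (C / ((k:ℝ) + 1) ^ 2) := by
        refine Finset.prod_le_prod (fun k _ => by positivity) (fun k _ => ?_)
        have h1 : μ / (((m:ℝ) + k + 1) * ((m:ℝ) + k + d)) ≤ C / ((k:ℝ) + 1) ^ 2 := by
          apply div_le_div₀ hC hμC (by positivity) (hq k).2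
        calc 1 + μ / (((m:ℝ) + k + 1) * ((m:ℝ) + k + d))
            ≤ 1 + C / ((k:ℝ) + 1) ^ 2 := by linarith
          _ ≤ Real.exp (C / ((k:ℝ) + 1) ^ 2) := by
              have := Real.add_one_le_exp (C / ((k:ℝ) + 1) ^ 2)
              linarith
    _ = Real.exp (∑ k ∈ Finset.range K, C / ((k:ℝ) + 1) ^ 2) := (Real.exp_sum _ _).symm
    _ ≤ Real.exp (C * ∑' k : ℕ, 1 / ((k : ℝ) + 1) ^ 2) := by
        apply Real.exp_le_exp.mpr
        have : ∑ k ∈ Finset.range K, C / ((k:ℝ) + 1) ^ 2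
            = C * ∑ k ∈ Finset.range K, 1 / ((k:ℝ) + 1) ^ 2 := by
          rw [Finset.mul_sum]; exact Finset.sum_congr rfl fun k _ => by ring
        rw [this]
        refine mul_le_mul_of_nonneg_left ?_ hC
        exact Summable.sum_le_tsum _ (fun k _ => by positivity) hsum


/-- If B = Σ_{n=0}^m c_n Π_n and D = Σ_n λ_n Π_n for a family of mutually
orthogonal self-adjoint projections Π_n summing to the identity, with λ_n ≥ 0,
λ_0 = 0, 0 ≤ c_n ≤ 1, c_0 = 1, and c_n = ∏_{k≥1}(1 − λ_n/((m+k)(m+k+d-1)))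
(the product being 0 for n > m), then B = Υ_m(D) in the functional calculus,
i.e. the partial products ∏_{k=1}^K (1 − D/((m+k)(m+k+d-1))) converge strongly
to B. -/
theorem berezin_eq_upsilon_of_casimir (d m : ℕ) (hd : 2 ≤ d)
    {E : Type*} [NormedAddCommGroup E] [InnerProductSpace ℂ E] [CompleteSpace E]
    (Proj : ℕ → E →L[ℂ] E)
    (hsa : ∀ n, IsSelfAdjoint (Proj n))
    (hidem : ∀ n, Proj n ∘L Proj n = Proj n)
    (horth : ∀ i j, i ≠ j → Proj i ∘L Proj j = 0)
    (hcomplete : ∀ x : E, HasSum (fun n => Proj n x) x)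
    (c lam : ℕ → ℝ)
    (hc0 : c 0 = 1) (hc : ∀ n, 0 ≤ c n ∧ c n ≤ 1)
    (hlam0 : lam 0 = 0) (hlam : ∀ n, 0 ≤ lam n)
    (B D : E →L[ℂ] E)
    (hB : B = ∑ n ∈ Finset.range (m + 1), (c n : ℂ) • Proj n)
    (hD : ∀ x : E, HasSum (fun n => (lam n : ℂ) • Proj n x) (D x))
    (hprod : ∀ n : ℕ,
      HasProd (fun k : ℕ => 1 - lam n / ((m + k + 1) * (m + k + d)))
        (if n ≤ m then c n else 0)) :
    ∀ x : E,
      Tendsto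
        (fun K : ℕ =>
          (((List.range K).map
            (fun k => (1 : E →L[ℂ] E)
              - ((((m : ℂ) + k + 1) * ((m : ℂ) + k + d))⁻¹) • D)).prod) x)
        atTop (nhds (B x)) := by
  intro x
  let P : ℕ → E →L[ℂ] E := fun K =>
    ((List.range K).map
       (fun k => (1 : E →L[ℂ] E)
         - ((((m : ℂ) + k + 1) * ((m : ℂ) + k + d))⁻¹) • D)).prod
  show Tendsto (fun K => P K x) atTop (nhds (B x))
  -- pointwise projections facts
  have hPP : ∀ i j (y : E), i ≠ j → Proj i (Proj j y) = 0 := by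
    intro i j y hij
    have := DFunLike.congr_fun (horth i j hij) y
    simpa using this
  have hPidem : ∀ n (y : E), Proj n (Proj n y) = Proj n y := by
    intro n y
    have := DFunLike.congr_fun (hidem n) y
    simpa using this
  have hDproj : ∀ n (y : E), D (Proj n y) = (lam n : ℂ) • Proj n y := by
    intro n y
    have h1 : HasSum (fun j => (lam j : ℂ) • Proj j (Proj n y))
        ((lam n : ℂ) • Proj n (Proj n y)) :=
      hasSum_single (f := fun j => (lam j : ℂ) • Proj j (Proj n y)) n
        (fun j hj => by
          show (lam j : ℂ) • Proj j (Proj n y) = 0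
          rw [hPP j n y hj, smul_zero])
    rw [hPidem n y] at h1
    exact (hD (Proj n y)).unique h1
  -- the scalar partial products
  let p : ℕ → ℕ → ℝ := fun K n =>
    ∏ k ∈ Finset.range K, (1 - lam n / ((m + k + 1) * (m + k + d)))
  have hPeig : ∀ K n (y : E), P K (Proj n y) = ((p K n : ℝ) : ℂ) • Proj n y :=
    fun K n y => aux_eig_prod m d D (lam n) (Proj n y) (hDproj n y) K
  let c' : ℕ → ℝ := fun n => if n ≤ m then c n else 0
  have hptend : ∀ n, Tendsto (fun K => p K n) atTop (nhds (c' n)) :=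
    fun n => (hprod n).tendsto_prod_nat
  have hBproj : ∀ n (y : E), B (Proj n y) = ((c' n : ℝ) : ℂ) • Proj n y := by
    intro n y
    rw [hB]
    rw [ContinuousLinearMap.sum_apply]
    by_cases hn : n ≤ m
    · rw [Finset.sum_eq_single_of_mem n (Finset.mem_range.mpr (Nat.lt_succ_of_le hn))]
      · simp only [ContinuousLinearMap.smul_apply, c']
        rw [if_pos hn, hPidem n y]
      · intro j hj hjn
        simp only [ContinuousLinearMap.smul_apply]
        rw [hPP j n y hjn, smul_zero]
    · rw [Finset.sum_eq_zero]
      · simp only [c', if_neg hn]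
        simp
      · intro j hj
        have hjn : j ≠ n := by
          intro h
          exact hn (h ▸ Nat.lt_succ_iff.mp (Finset.mem_range.mp hj))
        simp only [ContinuousLinearMap.smul_apply]
        rw [hPP j n y hjn, smul_zero]
  -- uniform bound
  set M : ℝ := Real.exp (‖D‖ * ∑' k : ℕ, 1 / ((k : ℝ) + 1) ^ 2) with hMdef
  have hM0 : 0 < M := Real.exp_pos _
  have hpbound : ∀ K n (y : E), |p K n| * ‖Proj n y‖ ≤ M * ‖Proj n y‖ := by
    intro K n y
    rcases eq_or_ne (Proj n y) 0 with h0 | h0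
    · simp [h0]
    · have hny : 0 < ‖Proj n y‖ := norm_pos_iff.mpr h0
      have hlamD : lam n ≤ ‖D‖ := by
        have h1 : ‖D (Proj n y)‖ ≤ ‖D‖ * ‖Proj n y‖ := D.le_opNorm _
        rw [hDproj n y, norm_smul] at h1
        have h2 : ‖((lam n : ℝ) : ℂ)‖ = lam n := by
          rw [Complex.norm_real, Real.norm_eq_abs, abs_of_nonneg (hlam n)]
        rw [h2] at h1
        exact le_of_mul_le_mul_right h1 hny
      have := aux_prod_bound m d (le_trans one_le_two hd) ‖D‖ (lam n) (hlam n) hlamD K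
      exact mul_le_mul_of_nonneg_right this (norm_nonneg _)
  -- orthogonality of scaled components
  have hinner0 : ∀ (y : E) (a b : ℂ) i j, i ≠ j →
      (inner ℂ (a • Proj i y) (b • Proj j y) : ℂ) = 0 := by
    intro y a b i j hij
    rw [inner_smul_left, inner_smul_right]
    have h1 : (inner ℂ (Proj i y) (Proj j y) : ℂ) = inner ℂ y (Proj i (Proj j y)) :=
      (hsa i).isSymmetric y (Proj j y)
    rw [h1, hPP i j y hij, inner_zero_right, mul_zero, mul_zero]
  -- projection-sum bound : ‖∑_{n ∈ t} Proj n y‖ ≤ ‖y‖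
  have hQbound : ∀ (y : E) (t : Finset ℕ), ‖∑ n ∈ t, Proj n y‖ ≤ ‖y‖ := by
    intro y t
    set w : E := ∑ n ∈ t, Proj n y with hw
    have hww : (inner ℂ w w : ℂ) = inner ℂ y w := by
      rw [hw, inner_sum, inner_sum]
      refine Finset.sum_congr rfl fun j hj => ?_
      rw [sum_inner, Finset.sum_eq_single_of_mem j hj]
      · have h1 : (inner ℂ (Proj j y) (Proj j y) : ℂ) = inner ℂ y (Proj j (Proj j y)) :=
          (hsa j).isSymmetric y (Proj j y)
        rw [h1, hPidem j y]
      · intro i hi hij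
        have h1 : (inner ℂ (Proj i y) (Proj j y) : ℂ) = inner ℂ y (Proj i (Proj j y)) :=
          (hsa i).isSymmetric y (Proj j y)
        rw [h1, hPP i j y hij, inner_zero_right]
    have h2 : ‖w‖ ^ 2 ≤ ‖y‖ * ‖w‖ := by
      have h3 : ‖w‖ ^ 2 = RCLike.re (inner ℂ w w : ℂ) := norm_sq_eq_re_inner (𝕜 := ℂ) w
      rw [h3, hww]
      calc RCLike.re (inner ℂ y w : ℂ) ≤ ‖(inner ℂ y w : ℂ)‖ := RCLike.re_le_norm _
        _ ≤ ‖y‖ * ‖w‖ := norm_inner_le_norm y w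
    by_contra hcon
    push_neg at hcon
    nlinarith [norm_nonneg w, norm_nonneg y]
  -- bound on ‖P K y‖ for tails : ‖P K y‖ ≤ M * ‖y‖
  have hPbound : ∀ K (y : E), ‖P K y‖ ≤ M * ‖y‖ := by
    intro K y
    have hsum : HasSum (fun n => ((p K n : ℝ) : ℂ) • Proj n y) (P K y) := by
      have h := (P K).hasSum (hcomplete y)
      simp only [hPeig] at h
      exact h
    -- bound every finite partial sum
    have hfin : ∀ t : Finset ℕ, ‖∑ n ∈ t, ((p K n : ℝ) : ℂ) • Proj n y‖ ≤ M * ‖y‖ := by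
      intro t
      have hsq : ‖∑ n ∈ t, ((p K n : ℝ) : ℂ) • Proj n y‖ ^ 2 ≤ (M * ‖y‖) ^ 2 := by
        rw [aux_pythagoras t _ (fun i _ j _ hij => hinner0 y _ _ i j hij)]
        have h1 : ∀ n ∈ t, ‖((p K n : ℝ) : ℂ) • Proj n y‖ ^ 2 ≤ M ^ 2 * ‖Proj n y‖ ^ 2 := by
          intro n _
          have h2 : ‖((p K n : ℝ) : ℂ) • Proj n y‖ = |p K n| * ‖Proj n y‖ := by
            rw [norm_smul, Complex.norm_real, Real.norm_eq_abs]
          rw [h2]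
          have h3 := hpbound K n y
          have h4 : (0:ℝ) ≤ |p K n| * ‖Proj n y‖ := by positivity
          nlinarith [norm_nonneg (Proj n y)]
        calc ∑ n ∈ t, ‖((p K n : ℝ) : ℂ) • Proj n y‖ ^ 2
            ≤ ∑ n ∈ t, M ^ 2 * ‖Proj n y‖ ^ 2 := Finset.sum_le_sum h1
          _ = M ^ 2 * ∑ n ∈ t, ‖Proj n y‖ ^ 2 := by rw [Finset.mul_sum]
          _ = M ^ 2 * ‖∑ n ∈ t, Proj n y‖ ^ 2 := by
              rw [aux_pythagoras t _ (fun i _ j _ hij => by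
                have h1 : (inner ℂ (Proj i y) (Proj j y) : ℂ) = inner ℂ y (Proj i (Proj j y)) :=
                  (hsa i).isSymmetric y (Proj j y)
                rw [h1, hPP i j y hij, inner_zero_right])]
          _ ≤ M ^ 2 * ‖y‖ ^ 2 :=
              mul_le_mul_of_nonneg_left
                (pow_le_pow_left₀ (norm_nonneg _) (hQbound y t) 2) (by positivity)
          _ = (M * ‖y‖) ^ 2 := by ring
      have h5 : (0:ℝ) ≤ M * ‖y‖ := by positivity
      nlinarith [norm_nonneg (∑ n ∈ t, ((p K n : ℝ) : ℂ) • Proj n y)]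
    exact le_of_tendsto' (Filter.Tendsto.norm hsum) (fun t => hfin t)
  -- final epsilon argument
  rw [Metric.tendsto_atTop]
  intro ε hε
  set δ : ℝ := ε / (2 * (M + 1)) with hδdef
  have hδ : 0 < δ := by positivity
  have htends := (hcomplete x).tendsto_sum_nat
  rw [Metric.tendsto_atTop] at htends
  obtain ⟨N₀, hN₀⟩ := htends δ hδ
  set N : ℕ := max N₀ (m + 1) with hN
  set s : E := ∑ n ∈ Finset.range N, Proj n x with hs
  have hrs : ‖x - s‖ < δ := by
    have h := hN₀ N (le_max_left _ _)
    rw [dist_eq_norm] at h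
    rw [← norm_neg, neg_sub]
    exact h
  set r : E := x - s with hr
  have hxdecomp : x = s + r := by rw [hr]; abel
  -- the tail is annihilated by each Proj j with j ≤ m
  have hProjr : ∀ j, j ≤ m → Proj j r = 0 := by
    intro j hj
    have hjN : j ∈ Finset.range N :=
      Finset.mem_range.mpr (lt_of_lt_of_le (Nat.lt_succ_of_le hj) (le_max_right N₀ (m + 1)))
    have h1 : Proj j s = Proj j x := by
      rw [hs, map_sum, Finset.sum_eq_single_of_mem j hjN]
      · exact hPidem j x
      · intro i hi hij
        exact hPP j i x (Ne.symm hij)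
    rw [hr, map_sub, h1, sub_self]
  have hBx : B x = B s := by
    have hBr : B r = 0 := by
      rw [hB, ContinuousLinearMap.sum_apply]
      refine Finset.sum_eq_zero fun j hj => ?_
      simp only [ContinuousLinearMap.smul_apply]
      rw [hProjr j (Nat.lt_succ_iff.mp (Finset.mem_range.mp hj)), smul_zero]
    have h3 : B x - B s = 0 := by rw [← map_sub]; exact hBr
    exact sub_eq_zero.mp h3
  -- convergence on the head
  have hhead : Tendsto (fun K => P K s) atTop (nhds (B s)) := by
    have h1 : ∀ K, P K s = ∑ n ∈ Finset.range N, ((p K n : ℝ) : ℂ) • Proj n x := by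
      intro K; rw [hs, map_sum]; exact Finset.sum_congr rfl fun n _ => hPeig K n x
    have h2 : B s = ∑ n ∈ Finset.range N, ((c' n : ℝ) : ℂ) • Proj n x := by
      rw [hs, map_sum]; exact Finset.sum_congr rfl fun n _ => hBproj n x
    simp only [h1, h2]
    refine tendsto_finset_sum _ fun n _ => ?_
    exact ((Complex.continuous_ofReal.tendsto _).comp (hptend n)).smul_const (Proj n x)
  rw [Metric.tendsto_atTop] at hhead
  obtain ⟨K₀, hK₀⟩ := hhead (ε / 2) (by positivity)
  refine ⟨K₀, fun K hK => ?_⟩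
  have hdiff : P K x - B x = (P K s - B s) + P K r := by
    rw [hBx]
    conv_lhs => rw [hxdecomp]
    rw [map_add]
    abel
  have hstep : dist (P K x) (B x) < ε / 2 + M * δ := by
    rw [dist_eq_norm, hdiff]
    have ha := hK₀ K hK
    rw [dist_eq_norm] at ha
    have hb : ‖P K r‖ ≤ M * ‖r‖ := hPbound K r
    have hc2 : M * ‖r‖ < M * δ := by
      apply mul_lt_mul_of_pos_left _ hM0
      rw [hr]; exact hrs
    calc ‖(P K s - B s) + P K r‖ ≤ ‖P K s - B s‖ + ‖P K r‖ := norm_add_le _ _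
      _ < ε / 2 + M * δ := add_lt_add_of_lt_of_le ha (le_of_lt (lt_of_le_of_lt hb hc2))
  have hfinal : ε / 2 + M * δ ≤ ε := by
    rw [hδdef]
    have hM1 : (0:ℝ) < M + 1 := by linarith
    have key : M * (ε / (2 * (M + 1))) ≤ ε / 2 := by
      rw [mul_div_assoc', div_le_div_iff₀ (by positivity) (by norm_num)]
      nlinarith [hε.le, hM0.le]
    linarith
  exact lt_of_lt_of_le hstep hfinal
end
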